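/- arXiv:2105.13357 — 5 statements merged into one kernel-verified Lean document; each statement's English description precedes it below -/
import Mathlib

section
/- Let $G$ be a DAG for which the shortest trek map $\psi_G$ is well defined, and define the end point map $\eta_G$ by $\eta_G(\sigma_{ij}) = d_i d_j$ if there is a trek between $i$ and $j$ and $\eta_G(\sigma_{ij}) = 0$ otherwise. Then $\ker \psi_G \subseteq \ker \eta_G$. -/
open MvPolynomial

/-- A (simple) trek in a directed graph with adjacency `Adj`: a pair of directed
paths from a common source (top) vertex down to `i` and down to `j`, with no
repeated vertices overall (i.e. a simple colliderless path between `i` and `j`). -/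
structure Trek {V : Type*} (Adj : V → V → Prop) (i j : V) where
  left : List V
  right : List V
  left_ne : left ≠ []
  right_ne : right ≠ []
  same_top : left.head? = right.head?
  chain_left : left.Chain' Adj
  chain_right : right.Chain' Adj
  last_left : left.getLast? = some i
  last_right : right.getLast? = some j
  nodup : (left ++ right.tail).Nodup

namespace Trek

variable {V : Type*} {Adj : V → V → Prop} {i j : V}

/-- The topmost (source) vertex of a trek. -/
def top (t : Trek Adj i j) : V := t.left.head t.left_ne

/-- The list of directed edges used by a trek. -/
def edges (t : Trek Adj i j) : List (V × V) :=
  t.left.zip t.left.tail ++ t.right.zip t.right.tail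

end Trek

/-- A trek is shortest if no trek between the same endpoints has fewer edges. -/
def IsShortestTrek {V : Type*} {Adj : V → V → Prop} {i j : V} (t : Trek Adj i j) : Prop :=
  ∀ t' : Trek Adj i j, t.edges.length ≤ t'.edges.length

/-- Between any two vertices there is a unique shortest trek (whenever some trek
exists); this is the condition for the shortest trek map to be well defined. -/
def ShortestTreksUnique {V : Type*} (Adj : V → V → Prop) : Prop :=
  ∀ (i j : V) (t t' : Trek Adj i j), IsShortestTrek t → IsShortestTrek t' →
    t'.left = t.left ∧ t'.right = t.right

/-- A DAG on vertex set `Fin n`, with all edges pointing from a smaller vertex to a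
larger one (vertices are numerically ordered, which guarantees acyclicity). -/
structure DAG (n : ℕ) where
  E : Finset (Fin n × Fin n)
  increasing : ∀ e ∈ E, e.1 < e.2

def DAG.Adj {n : ℕ} (G : DAG n) (i j : Fin n) : Prop := (i, j) ∈ G.E

/-- Index type for the indeterminates `σ_{ij}`, `1 ≤ i ≤ j ≤ n`. -/
abbrev SymIdx (n : ℕ) := {p : Fin n × Fin n // p.1 ≤ p.2}

/-- The monomial `a_{top t} * ∏_{(k,l) ∈ t} λ_{kl}` associated to a trek `t`, in the
polynomial ring `ℂ[a_i, λ_{kl}]` (where `a_i = X (Sum.inl i)`, `λ_{kl} = X (Sum.inr (k,l))`). -/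
noncomputable def trekMonomial {n : ℕ} {Adj : Fin n → Fin n → Prop} {i j : Fin n}
    (t : Trek Adj i j) : MvPolynomial (Fin n ⊕ Fin n × Fin n) ℂ :=
  X (Sum.inl t.top) *
    (t.edges.map fun e => (X (Sum.inr e) : MvPolynomial (Fin n ⊕ Fin n × Fin n) ℂ)).prod

/-- `ψ` is the shortest trek map of `G`: it sends `σ_{ij}` to `0` when there is no trek
between `i` and `j`, and to the monomial of the (unique) shortest trek otherwise
(for `i = j` the unique trek is trivial and the monomial is `a_i`). -/
def IsShortestTrekMap {n : ℕ} (G : DAG n)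
    (ψ : MvPolynomial (SymIdx n) ℂ →ₐ[ℂ] MvPolynomial (Fin n ⊕ Fin n × Fin n) ℂ) : Prop :=
  ∀ p : SymIdx n,
    (IsEmpty (Trek G.Adj p.1.1 p.1.2) → ψ (X p) = 0) ∧
    (∀ t : Trek G.Adj p.1.1 p.1.2, IsShortestTrek t → ψ (X p) = trekMonomial t)

/-- `η` is the end point map of `G`: `η(σ_{ij}) = d_i d_j` if there is a trek between
`i` and `j`, and `0` otherwise. -/
def IsEndPointMap {n : ℕ} (G : DAG n)
    (η : MvPolynomial (SymIdx n) ℂ →ₐ[ℂ] MvPolynomial (Fin n) ℂ) : Prop :=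
  ∀ p : SymIdx n,
    (Nonempty (Trek G.Adj p.1.1 p.1.2) → η (X p) = X p.1.1 * X p.1.2) ∧
    (IsEmpty (Trek G.Adj p.1.1 p.1.2) → η (X p) = 0)

/-- Telescoping product along a path. -/
lemma telescope_prod {V : Type*} {K : Type*} [Field K] (f : V → K) (hf : ∀ v, f v ≠ 0) :
    ∀ (L : List V) (a : V),
      (((a :: L).zip L).map (fun e => f e.2 / f e.1)).prod
        = f ((a :: L).getLast (List.cons_ne_nil a L)) / f a := by
  intro L
  induction L with
  | nil => intro a; simp [div_self (hf a)]
  | cons b L' ih =>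
      intro a
      simp only [List.zip_cons_cons, List.map_cons, List.prod_cons]
      rw [ih b, List.getLast_cons (List.cons_ne_nil b L')]
      rw [div_mul_div_comm, mul_comm (f b)]
      rw [mul_div_mul_right _ _ (hf b)]

lemma telescope_prod' {V : Type*} {K : Type*} [Field K] (f : V → K) (hf : ∀ v, f v ≠ 0)
    (L : List V) (hL : L ≠ []) :
    ((L.zip L.tail).map (fun e => f e.2 / f e.1)).prod
      = f (L.getLast hL) / f (L.head hL) := by
  obtain ⟨a, L', rfl⟩ := List.exists_cons_of_ne_nil hL
  simpa using telescope_prod f hf L' a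

/-- Existence of a shortest trek when some trek exists. -/
lemma exists_shortest_trek {V : Type*} {Adj : V → V → Prop} {i j : V}
    (h : Nonempty (Trek Adj i j)) :
    ∃ t : Trek Adj i j, IsShortestTrek t := by
  classical
  obtain ⟨t0⟩ := h
  have hex : ∃ m, ∃ t : Trek Adj i j, t.edges.length = m := ⟨_, t0, rfl⟩
  obtain ⟨t, ht⟩ := Nat.find_spec hex
  refine ⟨t, fun t' => ?_⟩
  rw [ht]
  exact Nat.find_min' hex ⟨t', rfl⟩

theorem stmt6 (n : ℕ) (G : DAG n) (hst : ShortestTreksUnique G.Adj)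
    (ψ : MvPolynomial (SymIdx n) ℂ →ₐ[ℂ] MvPolynomial (Fin n ⊕ Fin n × Fin n) ℂ)
    (hψ : IsShortestTrekMap G ψ)
    (η : MvPolynomial (SymIdx n) ℂ →ₐ[ℂ] MvPolynomial (Fin n) ℂ)
    (hη : IsEndPointMap G η) :
    RingHom.ker ψ.toRingHom ≤ RingHom.ker η.toRingHom := by
  classical
  set R := MvPolynomial (Fin n) ℂ
  let K := FractionRing R
  let d : Fin n → K := fun k => algebraMap R K (X k)
  have hd : ∀ k, d k ≠ 0 := by
    intro k h
    exact X_ne_zero k ((IsFractionRing.injective R K) (by rw [map_zero]; exact h))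
  let θ : MvPolynomial (Fin n ⊕ Fin n × Fin n) ℂ →ₐ[ℂ] K :=
    aeval (Sum.elim (fun s => d s ^ 2) (fun e => d e.2 / d e.1))
  let ι : R →ₐ[ℂ] K := IsScalarTower.toAlgHom ℂ R K
  have key : ι.comp η = θ.comp ψ := by
    apply MvPolynomial.algHom_ext
    intro p
    simp only [AlgHom.comp_apply]
    by_cases h : Nonempty (Trek G.Adj p.1.1 p.1.2)
    · obtain ⟨t, ht⟩ := exists_shortest_trek h
      rw [(hη p).1 h, (hψ p).2 t ht]
      have etop : t.left.head t.left_ne = t.top := rfl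
      have rtop : t.right.head t.right_ne = t.top := by
        have h1 := t.left.head?_eq_head t.left_ne
        have h2 := t.right.head?_eq_head t.right_ne
        have := t.same_top
        rw [h1, h2] at this
        exact (Option.some_inj.mp this).symm
      have llast : t.left.getLast t.left_ne = p.1.1 := by
        have := t.last_left
        rw [List.getLast?_eq_getLast t.left_ne] at this
        exact Option.some_inj.mp this
      have rlast : t.right.getLast t.right_ne = p.1.2 := by
        have := t.last_right
        rw [List.getLast?_eq_getLast t.right_ne] at this
        exact Option.some_inj.mp this
      have hθmon : θ (trekMonomial t) = d p.1.1 * d p.1.2 := by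
        have hedges : (t.edges.map fun e => (θ (X (Sum.inr e)) : K)).prod
            = d p.1.1 / d t.top * (d p.1.2 / d t.top) := by
          have : ∀ e : Fin n × Fin n, θ (X (Sum.inr e)) = d e.2 / d e.1 := by
            intro e; simp [θ]
          simp only [this]
          rw [Trek.edges, List.map_append, List.prod_append,
            telescope_prod' d hd t.left t.left_ne,
            telescope_prod' d hd t.right t.right_ne,
            llast, rlast, etop, rtop]
        rw [trekMonomial, map_mul, map_list_prod, List.map_map]
        have : θ (X (Sum.inl t.top)) = d t.top ^ 2 := by simp [θ]
        rw [this]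
        have : (List.map (⇑θ ∘ fun e => (X (Sum.inr e) :
            MvPolynomial (Fin n ⊕ Fin n × Fin n) ℂ)) t.edges).prod
            = d p.1.1 / d t.top * (d p.1.2 / d t.top) := by
          rw [← hedges]; rfl
        rw [this, div_mul_div_comm, ← sq, mul_div_assoc']
        rw [mul_comm (d t.top ^ 2), mul_div_assoc,
          div_self (pow_ne_zero 2 (hd t.top)), mul_one]
      rw [hθmon, map_mul]
      rfl
    · rw [(hη p).2 (not_nonempty_iff.mp h), (hψ p).1 (not_nonempty_iff.mp h)]
      simp
  intro q hq
  have hq0 : ψ q = 0 := hq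
  have : ι (η q) = θ (ψ q) := by
    have := congrArg (fun f : MvPolynomial (SymIdx n) ℂ →ₐ[ℂ] K => f q) key
    simpa using this
  rw [hq0, map_zero] at this
  exact (IsFractionRing.injective R K)
    (show algebraMap R K (η q) = algebraMap R K 0 by rw [map_zero]; exact this)
end

section
/- Let $G$ be a DAG and $G'$ the DAG obtained by adding a new sink $s$ adjacent from every vertex of $G$. If the shortest trek map of $G$ is well defined and $ST_G = \ker \psi_G$, then the shortest trek map of $G'$ is well defined and $\ker \psi_{G'}$ equals the extension of $\ker \psi_G$ to the larger polynomial ring; in particular no indeterminate of the form $\sigma_{is}$ ($i \in V(G')$) appears in any minimal generator of $\ker \psi_{G'}$. -/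
open MvPolynomial

/-- The DAG obtained from `G` by adding a new vertex `s = Fin.last n` together with
all edges `i → s` for `i ∈ V(G)`. -/
def addSink {n : ℕ} (G : DAG n) : DAG (n + 1) where
  E := G.E.image (fun e => (e.1.castSucc, e.2.castSucc)) ∪
       Finset.univ.image (fun i : Fin n => (i.castSucc, Fin.last n))
  increasing := by
    intro e he
    simp only [Finset.mem_union, Finset.mem_image, Finset.mem_univ, true_and] at he
    rcases he with ⟨a, ha, rfl⟩ | ⟨i, rfl⟩
    · exact Fin.castSucc_lt_castSucc_iff.mpr (G.increasing a ha)
    · exact Fin.castSucc_lt_last i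

/-- The inclusion of the indeterminates `σ_{ij}` of `G` into those of `addSink G`. -/
def liftIdx (n : ℕ) (p : SymIdx n) : SymIdx (n + 1) :=
  ⟨(p.1.1.castSucc, p.1.2.castSucc), Fin.castSucc_le_castSucc_iff.mpr p.2⟩

/-! ### Auxiliary material -/

namespace StmtAux

variable {n : ℕ}

lemma addSink_not_adj_last (G : DAG n) (y : Fin (n + 1)) : ¬ (addSink G).Adj (Fin.last n) y := by
  intro h
  simp only [DAG.Adj, addSink, Finset.mem_union, Finset.mem_image, Finset.mem_univ, true_and,
    Prod.mk.injEq] at h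
  rcases h with ⟨a, _, h1, _⟩ | ⟨i, h1, _⟩
  · exact absurd h1 (Fin.castSucc_lt_last _).ne
  · exact absurd h1 (Fin.castSucc_lt_last _).ne

lemma addSink_adj_castSucc {G : DAG n} {i j : Fin n} :
    (addSink G).Adj i.castSucc j.castSucc ↔ G.Adj i j := by
  simp only [DAG.Adj, addSink, Finset.mem_union, Finset.mem_image, Finset.mem_univ, true_and,
    Prod.mk.injEq]
  constructor
  · rintro (⟨a, ha, h1, h2⟩ | ⟨k, h1, h2⟩)
    · obtain rfl : a.1 = i := Fin.castSucc_injective n h1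
      obtain rfl : a.2 = j := Fin.castSucc_injective n h2
      exact ha
    · exact absurd h2.symm (Fin.castSucc_lt_last _).ne
  · intro h
    exact Or.inl ⟨(i, j), h, rfl, rfl⟩

lemma addSink_adj_to_last (G : DAG n) (i : Fin n) :
    (addSink G).Adj i.castSucc (Fin.last n) := by
  exact Finset.mem_union_right _ (Finset.mem_image.2 ⟨i, Finset.mem_univ i, rfl⟩)

lemma exists_adj_of_mem_chain' {V : Type*} {R : V → V → Prop} :
    ∀ {l : List V}, l.Chain' R → ∀ x ∈ l, l.getLast? ≠ some x → ∃ y, R x y := by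
  intro l
  induction l with
  | nil => intro _ x hx; simp at hx
  | cons a t ih =>
    intro hc x hx hlast
    cases t with
    | nil =>
      obtain rfl : x = a := by simpa using hx
      simp at hlast
    | cons b t' =>
      rcases List.mem_cons.1 hx with rfl | hxt
      · exact ⟨b, (List.isChain_cons_cons.1 hc).1⟩
      · exact ih hc.tail x hxt (by rwa [List.getLast?_cons_cons] at hlast)

lemma last_not_mem {G : DAG n} {l : List (Fin (n + 1))} {v : Fin (n + 1)}
    (hc : l.Chain' (addSink G).Adj) (hl : l.getLast? = some v) (hv : v ≠ Fin.last n) :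
    Fin.last n ∉ l := by
  intro hmem
  obtain ⟨y, hy⟩ := exists_adj_of_mem_chain' hc _ hmem (by
    rw [hl]; intro h; exact hv (by injection h))
  exact addSink_not_adj_last G y hy

lemma exists_map_castSucc : ∀ {l : List (Fin (n + 1))}, Fin.last n ∉ l →
    ∃ l0 : List (Fin n), l = l0.map Fin.castSucc := by
  intro l
  induction l with
  | nil => exact fun _ => ⟨[], rfl⟩
  | cons a t ih =>
    intro h
    obtain ⟨t0, ht0⟩ := ih (fun hm => h (List.mem_cons_of_mem _ hm))
    have ha : a ≠ Fin.last n := fun hh => h (hh ▸ List.mem_cons_self)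
    obtain ⟨a0, ha0⟩ := Fin.exists_castSucc_eq.2 ha
    exact ⟨a0 :: t0, by rw [List.map_cons, ha0, ht0]⟩

lemma eq_singleton_of_head_last {G : DAG n} {l : List (Fin (n + 1))}
    (hc : l.Chain' (addSink G).Adj) (hh : l.head? = some (Fin.last n)) : l = [Fin.last n] := by
  cases l with
  | nil => simp at hh
  | cons a t =>
    obtain rfl : a = Fin.last n := by simpa using hh
    cases t with
    | nil => rfl
    | cons b t' => exact absurd (List.isChain_cons_cons.1 hc).1 (addSink_not_adj_last G b)

lemma edges_length {V : Type*} {Adj : V → V → Prop} {i j : V} (t : Trek Adj i j) :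
    t.edges.length = (t.left.length - 1) + (t.right.length - 1) := by
  have h1 : t.left.length ≠ 0 := fun h => t.left_ne (List.length_eq_zero_iff.1 h)
  have h2 : t.right.length ≠ 0 := fun h => t.right_ne (List.length_eq_zero_iff.1 h)
  simp only [Trek.edges, List.length_append, List.length_zip, List.length_tail]
  omega

lemma exists_shortest {V : Type*} {Adj : V → V → Prop} {i j : V}
    (h : Nonempty (Trek Adj i j)) : ∃ t : Trek Adj i j, IsShortestTrek t := by
  classical
  obtain ⟨t0⟩ := h
  have hP : ∃ k, ∃ t : Trek Adj i j, t.edges.length = k := ⟨_, t0, rfl⟩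
  obtain ⟨t, ht⟩ := Nat.find_spec hP
  exact ⟨t, fun u => ht ▸ Nat.find_le ⟨u, rfl⟩⟩

/-- Lifting a trek of `G` to `addSink G`. -/
def liftTrek {G : DAG n} {i j : Fin n} (t : Trek G.Adj i j) :
    Trek (addSink G).Adj i.castSucc j.castSucc where
  left := t.left.map Fin.castSucc
  right := t.right.map Fin.castSucc
  left_ne := by simp [t.left_ne]
  right_ne := by simp [t.right_ne]
  same_top := by rw [List.head?_map, List.head?_map, t.same_top]
  chain_left := List.isChain_map_of_isChain _ (fun a b h => addSink_adj_castSucc.2 h) t.chain_left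
  chain_right := List.isChain_map_of_isChain _ (fun a b h => addSink_adj_castSucc.2 h) t.chain_right
  last_left := by rw [List.getLast?_map, t.last_left]; rfl
  last_right := by rw [List.getLast?_map, t.last_right]; rfl
  nodup := by
    rw [← List.map_tail, ← List.map_append]
    exact (List.nodup_map_iff (Fin.castSucc_injective n)).2 t.nodup

lemma liftTrek_edges {G : DAG n} {i j : Fin n} (t : Trek G.Adj i j) :
    (liftTrek t).edges = t.edges.map (Prod.map Fin.castSucc Fin.castSucc) := by
  simp only [Trek.edges, liftTrek, ← List.map_tail, List.zip_map, List.map_append]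

lemma liftTrek_edges_length {G : DAG n} {i j : Fin n} (t : Trek G.Adj i j) :
    (liftTrek t).edges.length = t.edges.length := by
  rw [liftTrek_edges, List.length_map]

lemma liftTrek_top {G : DAG n} {i j : Fin n} (t : Trek G.Adj i j) :
    (liftTrek t).top = t.top.castSucc := by
  have h1 := (liftTrek t).left_ne
  simp only [Trek.top, liftTrek] at h1 ⊢
  rw [List.head_map]

/-- Lowering a trek of `addSink G` between old vertices to a trek of `G`. -/
lemma exists_lower {G : DAG n} {i j : Fin n}
    (t' : Trek (addSink G).Adj i.castSucc j.castSucc) :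
    ∃ t : Trek G.Adj i j, t'.left = t.left.map Fin.castSucc ∧
      t'.right = t.right.map Fin.castSucc ∧ t'.edges.length = t.edges.length := by
  have hL : Fin.last n ∉ t'.left :=
    last_not_mem t'.chain_left t'.last_left (Fin.castSucc_lt_last i).ne
  have hR : Fin.last n ∉ t'.right :=
    last_not_mem t'.chain_right t'.last_right (Fin.castSucc_lt_last j).ne
  obtain ⟨l0, hl0⟩ := exists_map_castSucc hL
  obtain ⟨r0, hr0⟩ := exists_map_castSucc hR
  have hinj := Fin.castSucc_injective n
  refine ⟨⟨l0, r0, ?_, ?_, ?_, ?_, ?_, ?_, ?_, ?_⟩, hl0, hr0, ?_⟩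
  · intro h; exact t'.left_ne (by rw [hl0, h]; rfl)
  · intro h; exact t'.right_ne (by rw [hr0, h]; rfl)
  · have := t'.same_top
    rw [hl0, hr0, List.head?_map, List.head?_map] at this
    exact Option.map_injective hinj this
  · exact ((List.isChain_map _).1 (hl0 ▸ t'.chain_left)).imp fun a b h =>
      addSink_adj_castSucc.1 h
  · exact ((List.isChain_map _).1 (hr0 ▸ t'.chain_right)).imp fun a b h =>
      addSink_adj_castSucc.1 h
  · have := t'.last_left
    rw [hl0, List.getLast?_map] at this
    exact Option.map_injective hinj (by rw [this]; rfl)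
  · have := t'.last_right
    rw [hr0, List.getLast?_map] at this
    exact Option.map_injective hinj (by rw [this]; rfl)
  · have := t'.nodup
    rw [hl0, hr0, ← List.map_tail, ← List.map_append] at this
    exact (List.nodup_map_iff hinj).1 this
  · have e1 : t'.left.length = l0.length := by rw [hl0, List.length_map]
    have e2 : t'.right.length = r0.length := by rw [hr0, List.length_map]
    rw [edges_length, edges_length, e1, e2]

lemma nonempty_trek_iff {G : DAG n} {i j : Fin n} :
    Nonempty (Trek (addSink G).Adj i.castSucc j.castSucc) ↔ Nonempty (Trek G.Adj i j) := by
  constructor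
  · rintro ⟨t⟩; obtain ⟨t0, -⟩ := exists_lower t; exact ⟨t0⟩
  · rintro ⟨t⟩; exact ⟨liftTrek t⟩

lemma liftTrek_shortest {G : DAG n} {i j : Fin n} {t : Trek G.Adj i j}
    (ht : IsShortestTrek t) : IsShortestTrek (liftTrek t) := by
  intro u
  obtain ⟨u0, -, -, hlen⟩ := exists_lower u
  rw [liftTrek_edges_length, hlen]
  exact ht u0

lemma one_le_edges_length {V : Type*} {Adj : V → V → Prop} {i j : V} (hij : i ≠ j)
    (t : Trek Adj i j) : 1 ≤ t.edges.length := by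
  by_contra h
  have h0 : t.edges.length = 0 := by omega
  rw [edges_length] at h0
  have hl := List.length_pos_iff.2 t.left_ne
  have hr := List.length_pos_iff.2 t.right_ne
  obtain ⟨a, ha⟩ := List.length_eq_one_iff.1 (show t.left.length = 1 by omega)
  obtain ⟨b, hb⟩ := List.length_eq_one_iff.1 (show t.right.length = 1 by omega)
  obtain rfl : a = i := by have := t.last_left; rw [ha] at this; simpa using this
  obtain rfl : b = j := by have := t.last_right; rw [hb] at this; simpa using this
  have := t.same_top
  rw [ha, hb] at this
  exact hij (by simpa using this)

lemma trek_last_last {G : DAG n} (t : Trek (addSink G).Adj (Fin.last n) (Fin.last n)) :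
    t.left = [Fin.last n] ∧ t.right = [Fin.last n] := by
  have hr : t.right = [Fin.last n] := by
    cases hright : t.right with
    | nil => exact absurd hright t.right_ne
    | cons a u =>
      cases u with
      | nil =>
        have := t.last_right; rw [hright] at this
        simpa using congrArg (fun l => l) (by rw [show a = Fin.last n by simpa using this])
      | cons b u' =>
        exfalso
        have hmem : Fin.last n ∈ b :: u' := by
          have := t.last_right; rw [hright, List.getLast?_cons_cons] at this
          exact List.mem_of_mem_getLast? (this ▸ rfl)
        have hmem2 : Fin.last n ∈ t.left := List.mem_of_mem_getLast? (t.last_left ▸ rfl)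
        have hnd := List.nodup_append.1 t.nodup
        exact hnd.2.2 _ hmem2 _ (by rw [hright]; exact hmem) rfl
  have hh : t.left.head? = some (Fin.last n) := by rw [t.same_top, hr]; rfl
  exact ⟨eq_singleton_of_head_last t.chain_left hh, hr⟩

def trekToSink (G : DAG n) (x : Fin n) : Trek (addSink G).Adj x.castSucc (Fin.last n) where
  left := [x.castSucc]
  right := [x.castSucc, Fin.last n]
  left_ne := by simp
  right_ne := by simp
  same_top := rfl
  chain_left := List.isChain_singleton _
  chain_right := List.isChain_pair.2 (addSink_adj_to_last G x)
  last_left := rfl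
  last_right := rfl
  nodup := by simp [(Fin.castSucc_lt_last x).ne]

def trekFromSink (G : DAG n) (y : Fin n) : Trek (addSink G).Adj (Fin.last n) y.castSucc where
  left := [y.castSucc, Fin.last n]
  right := [y.castSucc]
  left_ne := by simp
  right_ne := by simp
  same_top := rfl
  chain_left := List.isChain_pair.2 (addSink_adj_to_last G y)
  chain_right := List.isChain_singleton _
  last_left := rfl
  last_right := rfl
  nodup := by simp [(Fin.castSucc_lt_last y).ne]

lemma trekToSink_edges_length (G : DAG n) (x : Fin n) :
    (trekToSink G x).edges.length = 1 := rfl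

lemma trekFromSink_edges_length (G : DAG n) (y : Fin n) :
    (trekFromSink G y).edges.length = 1 := rfl

lemma trekToSink_shortest (G : DAG n) (x : Fin n) : IsShortestTrek (trekToSink G x) := by
  intro u
  rw [trekToSink_edges_length]
  exact one_le_edges_length (Fin.castSucc_lt_last x).ne u

lemma trekFromSink_shortest (G : DAG n) (y : Fin n) : IsShortestTrek (trekFromSink G y) := by
  intro u
  rw [trekFromSink_edges_length]
  exact one_le_edges_length (Fin.castSucc_lt_last y).ne.symm u

lemma trek_to_last_eq {G : DAG n} {x : Fin (n + 1)} (hx : x ≠ Fin.last n)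
    (t : Trek (addSink G).Adj x (Fin.last n)) (h1 : t.edges.length = 1) :
    t.left = [x] ∧ t.right = [x, Fin.last n] := by
  rw [edges_length] at h1
  have hl := List.length_pos_iff.2 t.left_ne
  have hr := List.length_pos_iff.2 t.right_ne
  rcases (show (t.left.length = 1 ∧ t.right.length = 2) ∨
      (t.left.length = 2 ∧ t.right.length = 1) by omega) with ⟨hA, hB⟩ | ⟨hA, hB⟩
  · obtain ⟨a, ha⟩ := List.length_eq_one_iff.1 hA
    obtain ⟨b, c, hbc⟩ := List.length_eq_two.1 hB
    obtain rfl : a = x := by have := t.last_left; rw [ha] at this; simpa using this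
    obtain rfl : c = Fin.last n := by
      have := t.last_right; rw [hbc, List.getLast?_cons_cons] at this; simpa using this
    obtain rfl : b = a := by
      have := t.same_top; rw [ha, hbc] at this; simpa using this.symm
    exact ⟨ha, hbc⟩
  · exfalso
    obtain ⟨b, hb⟩ := List.length_eq_one_iff.1 hB
    obtain rfl : b = Fin.last n := by
      have := t.last_right; rw [hb] at this; simpa using this
    have hh : t.left.head? = some (Fin.last n) := by rw [t.same_top, hb]; rfl
    have := eq_singleton_of_head_last t.chain_left hh
    have := t.last_left; rw [‹t.left = [Fin.last n]›] at this
    exact hx (by simpa using this.symm)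

lemma trek_from_last_eq {G : DAG n} {y : Fin (n + 1)} (hy : y ≠ Fin.last n)
    (t : Trek (addSink G).Adj (Fin.last n) y) (h1 : t.edges.length = 1) :
    t.left = [y, Fin.last n] ∧ t.right = [y] := by
  rw [edges_length] at h1
  have hl := List.length_pos_iff.2 t.left_ne
  have hr := List.length_pos_iff.2 t.right_ne
  rcases (show (t.left.length = 2 ∧ t.right.length = 1) ∨
      (t.left.length = 1 ∧ t.right.length = 2) by omega) with ⟨hA, hB⟩ | ⟨hA, hB⟩
  · obtain ⟨a, c, hac⟩ := List.length_eq_two.1 hA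
    obtain ⟨b, hb⟩ := List.length_eq_one_iff.1 hB
    obtain rfl : b = y := by have := t.last_right; rw [hb] at this; simpa using this
    obtain rfl : c = Fin.last n := by
      have := t.last_left; rw [hac, List.getLast?_cons_cons] at this; simpa using this
    obtain rfl : a = b := by
      have := t.same_top; rw [hac, hb] at this; simpa using this
    exact ⟨hac, hb⟩
  · exfalso
    obtain ⟨a, ha⟩ := List.length_eq_one_iff.1 hA
    obtain rfl : a = Fin.last n := by
      have := t.last_left; rw [ha] at this; simpa using this
    have hh : t.right.head? = some (Fin.last n) := by rw [← t.same_top, ha]; rfl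
    have hsing := eq_singleton_of_head_last t.chain_right hh
    have := t.last_right; rw [hsing] at this
    exact hy (by simpa using this.symm)

lemma addSink_stu {G : DAG n} (hst : ShortestTreksUnique G.Adj) :
    ShortestTreksUnique (addSink G).Adj := by
  intro i j t t' ht ht'
  rcases eq_or_ne i (Fin.last n) with rfl | hi
  · rcases eq_or_ne j (Fin.last n) with rfl | hj
    · obtain ⟨l1, r1⟩ := trek_last_last t
      obtain ⟨l2, r2⟩ := trek_last_last t'
      exact ⟨l2.trans l1.symm, r2.trans r1.symm⟩
    · obtain ⟨y, rfl⟩ := Fin.exists_castSucc_eq.2 hj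
      have hne : Fin.last n ≠ y.castSucc := (Fin.castSucc_lt_last y).ne.symm
      have h1 : t.edges.length = 1 :=
        le_antisymm (by simpa [trekFromSink_edges_length] using ht (trekFromSink G y))
          (one_le_edges_length hne t)
      have h2 : t'.edges.length = 1 :=
        le_antisymm (by simpa [trekFromSink_edges_length] using ht' (trekFromSink G y))
          (one_le_edges_length hne t')
      obtain ⟨e1, e2⟩ := trek_from_last_eq hne.symm t h1
      obtain ⟨e3, e4⟩ := trek_from_last_eq hne.symm t' h2
      exact ⟨e3.trans e1.symm, e4.trans e2.symm⟩
  · rcases eq_or_ne j (Fin.last n) with rfl | hj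
    · obtain ⟨x, rfl⟩ := Fin.exists_castSucc_eq.2 hi
      have hne : x.castSucc ≠ Fin.last n := (Fin.castSucc_lt_last x).ne
      have h1 : t.edges.length = 1 :=
        le_antisymm (by simpa [trekToSink_edges_length] using ht (trekToSink G x))
          (one_le_edges_length hne t)
      have h2 : t'.edges.length = 1 :=
        le_antisymm (by simpa [trekToSink_edges_length] using ht' (trekToSink G x))
          (one_le_edges_length hne t')
      obtain ⟨e1, e2⟩ := trek_to_last_eq hne t h1
      obtain ⟨e3, e4⟩ := trek_to_last_eq hne t' h2
      exact ⟨e3.trans e1.symm, e4.trans e2.symm⟩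
    · obtain ⟨x, rfl⟩ := Fin.exists_castSucc_eq.2 hi
      obtain ⟨y, rfl⟩ := Fin.exists_castSucc_eq.2 hj
      obtain ⟨t0, hl0, hr0, hlen0⟩ := exists_lower t
      obtain ⟨t1, hl1, hr1, hlen1⟩ := exists_lower t'
      have hs0 : IsShortestTrek t0 := by
        intro u
        rw [← hlen0]
        exact (ht (liftTrek u)).trans (le_of_eq (liftTrek_edges_length u))
      have hs1 : IsShortestTrek t1 := by
        intro u
        rw [← hlen1]
        exact (ht' (liftTrek u)).trans (le_of_eq (liftTrek_edges_length u))
      obtain ⟨el, er⟩ := hst x y t0 t1 hs0 hs1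
      exact ⟨by rw [hl1, hl0, el], by rw [hr1, hr0, er]⟩

open MvPolynomial

/-- The embedding of the target variables of `ψ` into those of `ψ'`. -/
def embV (n : ℕ) : Fin n ⊕ Fin n × Fin n → Fin (n + 1) ⊕ Fin (n + 1) × Fin (n + 1) :=
  Sum.map Fin.castSucc (Prod.map Fin.castSucc Fin.castSucc)

lemma embV_injective (n : ℕ) : Function.Injective (embV n) :=
  (Fin.castSucc_injective n).sumMap
    ((Fin.castSucc_injective n).prodMap (Fin.castSucc_injective n))

lemma trekMonomial_lift {G : DAG n} {i j : Fin n} (t : Trek G.Adj i j) :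
    trekMonomial (liftTrek t) = rename (embV n) (trekMonomial t) := by
  rw [trekMonomial, trekMonomial, map_mul, rename_X, liftTrek_top, liftTrek_edges,
    map_list_prod, List.map_map, List.map_map]
  congr 1
  refine congrArg List.prod (List.map_congr_left fun e _ => ?_)
  show X (Sum.inr (Prod.map Fin.castSucc Fin.castSucc e)) = rename (embV n) (X (Sum.inr e))
  rw [rename_X]
  rfl

/-- The splitting of `SymIdx (n+1)` into sink indices and old indices. -/
def eIdx (n : ℕ) : SymIdx (n + 1) ≃ (Fin (n + 1) ⊕ SymIdx n) where
  toFun p :=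
    if h : p.1.2 = Fin.last n then Sum.inl p.1.1
    else Sum.inr ⟨(p.1.1.castPred (by
        intro hh
        exact h (le_antisymm (Fin.le_last _) (hh ▸ p.2))), p.1.2.castPred h), by
      rw [Fin.le_def, Fin.coe_castPred, Fin.coe_castPred]; exact p.2⟩
  invFun q := q.elim (fun i => ⟨(i, Fin.last n), Fin.le_last i⟩) (liftIdx n)
  left_inv p := by
    beta_reduce
    by_cases h : p.1.2 = Fin.last n
    · rw [dif_pos h]
      exact Subtype.ext (Prod.ext rfl h.symm)
    · rw [dif_neg h]
      exact Subtype.ext (Prod.ext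
        (Fin.castSucc_castPred _ (fun hh => h (le_antisymm (Fin.le_last _) (hh ▸ p.2))))
        (Fin.castSucc_castPred _ h))

  right_inv q := by
    cases q with
    | inl i => simp
    | inr q =>
      have h : (liftIdx n q).1.2 ≠ Fin.last n := (Fin.castSucc_lt_last _).ne
      beta_reduce
      simp only [Sum.elim_inr]
      simp only [h, ↓reduceDIte]
      congr 1

/-- The new variables of the target ring of `ψ'`: `a_s` and the `λ_{i s}`. -/
def newIdx (n : ℕ) : Fin (n + 1) → Fin (n + 1) ⊕ Fin (n + 1) × Fin (n + 1) :=
  fun i => if i = Fin.last n then Sum.inl (Fin.last n) else Sum.inr (i, Fin.last n)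

lemma newIdx_injective (n : ℕ) : Function.Injective (newIdx n) := by
  intro a b hab
  unfold newIdx at hab
  split_ifs at hab with ha hb hb
  · exact ha.trans hb.symm
  · exact congrArg Prod.fst (Sum.inr.inj hab)

lemma embV_not_mem_range_newIdx (n : ℕ) (x : Fin n ⊕ Fin n × Fin n) :
    embV n x ∉ Set.range (newIdx n) := by
  rintro ⟨i, hi⟩
  cases x with
  | inl a =>
    simp only [embV, Sum.map_inl, newIdx] at hi
    split_ifs at hi
    exact (Fin.castSucc_lt_last a).ne (Sum.inl.inj hi).symm
  | inr a =>
    simp only [embV, Sum.map_inr, newIdx, Prod.map] at hi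
    split_ifs at hi
    exact (Fin.castSucc_lt_last a.2).ne (congrArg Prod.snd (Sum.inr.inj hi)).symm

open Classical in
/-- The splitting of the target variables of `ψ'` into new variables and the rest. -/
noncomputable def eTgt (n : ℕ) :
    (Fin (n + 1) ⊕ Fin (n + 1) × Fin (n + 1)) ≃
      (Fin (n + 1) ⊕ {x : Fin (n + 1) ⊕ Fin (n + 1) × Fin (n + 1) //
        x ∉ Set.range (newIdx n)}) :=
  (Equiv.sumCompl (· ∈ Set.range (newIdx n))).symm.trans
    (Equiv.sumCongr (Equiv.ofInjective _ (newIdx_injective n)).symm (Equiv.refl _))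

lemma eTgt_newIdx (n : ℕ) (i : Fin (n + 1)) : eTgt n (newIdx n i) = Sum.inl i := by
  unfold eTgt
  rw [Equiv.trans_apply, Equiv.sumCompl_symm_apply_of_pos (Set.mem_range_self i)]
  simp only [Equiv.sumCongr_apply, Sum.map_inl]
  congr 1
  exact Equiv.ofInjective_symm_apply (newIdx_injective n) i

/-- The rest of the target variables, containing the image of `embV`. -/
noncomputable def embR (n : ℕ) :
    Fin n ⊕ Fin n × Fin n → {x : Fin (n + 1) ⊕ Fin (n + 1) × Fin (n + 1) //
      x ∉ Set.range (newIdx n)} :=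
  fun x => ⟨embV n x, embV_not_mem_range_newIdx n x⟩

lemma embR_injective (n : ℕ) : Function.Injective (embR n) := by
  intro a b hab
  exact embV_injective n (congrArg Subtype.val hab)

lemma eTgt_embV (n : ℕ) (x : Fin n ⊕ Fin n × Fin n) :
    eTgt n (embV n x) = Sum.inr (embR n x) := by
  unfold eTgt
  rw [Equiv.trans_apply, Equiv.sumCompl_symm_apply_of_neg (embV_not_mem_range_newIdx n x)]
  rfl

/-- The sink indices `σ_{i s}`. -/
def sinkIdx (n : ℕ) (i : Fin (n + 1)) : SymIdx (n + 1) := ⟨(i, Fin.last n), Fin.le_last i⟩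

lemma eIdx_liftIdx (q : SymIdx n) : eIdx n (liftIdx n q) = Sum.inr q := by
  have h : (liftIdx n q).1.2 ≠ Fin.last n := (Fin.castSucc_lt_last _).ne
  simp only [eIdx, Equiv.coe_fn_mk]
  rw [dif_neg h]
  congr 1

lemma eIdx_sinkIdx (i : Fin (n + 1)) : eIdx n (sinkIdx n i) = Sum.inl i := by
  simp only [eIdx, Equiv.coe_fn_mk, sinkIdx]
  rw [dif_pos trivial]

/-- Coefficientwise description of a ring homomorphism of polynomial rings which maps
variables to multiples of themselves. -/
lemma coeff_monomial_hom {κ R S : Type*} [CommSemiring R] [CommSemiring S]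
    (Φ : MvPolynomial κ R →+* MvPolynomial κ S) (ρ : R →+* S) (b : κ → S)
    (hC : ∀ r, Φ (C r) = C (ρ r)) (hX : ∀ i, Φ (X i) = C (b i) * X i)
    (F : MvPolynomial κ R) (m : κ →₀ ℕ) :
    coeff m (Φ F) = ρ (coeff m F) * m.prod fun i e => b i ^ e := by
  classical
  have key : ∀ (v : κ →₀ ℕ) (c : R),
      Φ (monomial v c) = monomial v (ρ c * v.prod fun i e => b i ^ e) := by
    intro v c
    rw [monomial_eq, map_mul, hC, map_finsuppProd]
    have h1 : (v.prod fun i e => Φ (X i ^ e)) =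
        v.prod fun i e => C (b i) ^ e * X i ^ e := by
      refine Finsupp.prod_congr fun i _ => ?_
      rw [map_pow, hX, mul_pow]
    have h2 : (C (ρ c * v.prod fun i e => b i ^ e) : MvPolynomial κ S) =
        C (ρ c) * v.prod fun i e => C (b i) ^ e := by
      rw [map_mul, map_finsuppProd]
      congr 1
      exact Finsupp.prod_congr fun i _ => by rw [map_pow]
    rw [h1, Finsupp.prod_mul, monomial_eq, h2]
    ring
  conv_lhs => rw [F.as_sum, map_sum]
  rw [coeff_sum]
  simp_rw [key, coeff_monomial]
  rw [Finset.sum_ite_eq' F.support m]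
  by_cases hm : m ∈ F.support
  · rw [if_pos hm]
  · rw [if_neg hm, notMem_support_iff.1 hm, map_zero, zero_mul]

variable {G : DAG n}
  {ψ : MvPolynomial (SymIdx n) ℂ →ₐ[ℂ] MvPolynomial (Fin n ⊕ Fin n × Fin n) ℂ}
  {ψ' : MvPolynomial (SymIdx (n + 1)) ℂ →ₐ[ℂ]
    MvPolynomial (Fin (n + 1) ⊕ Fin (n + 1) × Fin (n + 1)) ℂ}

lemma psi'_X_lift (hψ : IsShortestTrekMap G ψ) (hψ' : IsShortestTrekMap (addSink G) ψ')
    (q : SymIdx n) : ψ' (X (liftIdx n q)) = rename (embV n) (ψ (X q)) := by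
  by_cases hne : Nonempty (Trek G.Adj q.1.1 q.1.2)
  · obtain ⟨t, ht⟩ := exists_shortest hne
    have h1 : ψ (X q) = trekMonomial t := (hψ q).2 t ht
    have h2 : ψ' (X (liftIdx n q)) = trekMonomial (liftTrek t) :=
      (hψ' (liftIdx n q)).2 (liftTrek t) (liftTrek_shortest ht)
    rw [h1, h2, trekMonomial_lift]
  · have he : IsEmpty (Trek G.Adj q.1.1 q.1.2) := not_nonempty_iff.1 hne
    have he' : IsEmpty (Trek (addSink G).Adj q.1.1.castSucc q.1.2.castSucc) :=
      not_nonempty_iff.1 (fun h => hne (nonempty_trek_iff.1 h))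
    rw [(hψ q).1 he, (hψ' (liftIdx n q)).1 he', map_zero]

lemma trekMonomial_toSink (G : DAG n) (x : Fin n) :
    trekMonomial (trekToSink G x) =
      X (Sum.inl x.castSucc) * X (Sum.inr (x.castSucc, Fin.last n)) := by
  unfold trekMonomial Trek.top trekToSink Trek.edges
  simp

def trekLastLast (G : DAG n) : Trek (addSink G).Adj (Fin.last n) (Fin.last n) where
  left := [Fin.last n]
  right := [Fin.last n]
  left_ne := by simp
  right_ne := by simp
  same_top := rfl
  chain_left := List.isChain_singleton _
  chain_right := List.isChain_singleton _
  last_left := rfl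
  last_right := rfl
  nodup := by simp

lemma trekLastLast_shortest (G : DAG n) : IsShortestTrek (trekLastLast G) :=
  fun _ => Nat.zero_le _

lemma trekMonomial_lastLast (G : DAG n) :
    trekMonomial (trekLastLast G) = X (Sum.inl (Fin.last n)) := by
  unfold trekMonomial Trek.top trekLastLast Trek.edges
  simp

lemma psi'_X_sink (hψ' : IsShortestTrekMap (addSink G) ψ') (x : Fin n) :
    ψ' (X (sinkIdx n x.castSucc)) =
      X (Sum.inl x.castSucc) * X (Sum.inr (x.castSucc, Fin.last n)) := by
  rw [(hψ' (sinkIdx n x.castSucc)).2 (trekToSink G x) (trekToSink_shortest G x)]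
  exact trekMonomial_toSink G x

lemma psi'_X_last (hψ' : IsShortestTrekMap (addSink G) ψ') :
    ψ' (X (sinkIdx n (Fin.last n))) = X (Sum.inl (Fin.last n)) := by
  rw [(hψ' (sinkIdx n (Fin.last n))).2 (trekLastLast G) (trekLastLast_shortest G)]
  exact trekMonomial_lastLast G

lemma psi'_rename_lift (hψ : IsShortestTrekMap G ψ) (hψ' : IsShortestTrekMap (addSink G) ψ')
    (c : MvPolynomial (SymIdx n) ℂ) :
    ψ' (rename (liftIdx n) c) = rename (embV n) (ψ c) := by
  have h : ψ'.comp (rename (liftIdx n)) = ((rename (embV n)).comp ψ :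
      MvPolynomial (SymIdx n) ℂ →ₐ[ℂ] _) := by
    apply algHom_ext
    intro q
    simp only [AlgHom.comp_apply, rename_X]
    exact psi'_X_lift hψ hψ' q
  exact AlgHom.congr_fun h c

/-- The rest of the target variables. -/
abbrev RestT (n : ℕ) : Type :=
  {x : Fin (n + 1) ⊕ Fin (n + 1) × Fin (n + 1) // x ∉ Set.range (newIdx n)}

noncomputable def E1 (n : ℕ) : MvPolynomial (SymIdx (n + 1)) ℂ ≃ₐ[ℂ]
    MvPolynomial (Fin (n + 1)) (MvPolynomial (SymIdx n) ℂ) :=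
  (renameEquiv ℂ (eIdx n)).trans (sumAlgEquiv ℂ _ _)

noncomputable def E2 (n : ℕ) : MvPolynomial (Fin (n + 1) ⊕ Fin (n + 1) × Fin (n + 1)) ℂ ≃ₐ[ℂ]
    MvPolynomial (Fin (n + 1)) (MvPolynomial (RestT n) ℂ) :=
  (renameEquiv ℂ (eTgt n)).trans (sumAlgEquiv ℂ _ _)

lemma E1_rename_lift (c : MvPolynomial (SymIdx n) ℂ) :
    E1 n (rename (liftIdx n) c) = C c := by
  have h : (E1 n).toAlgHom.comp (rename (liftIdx n)) =
      IsScalarTower.toAlgHom ℂ (MvPolynomial (SymIdx n) ℂ)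
        (MvPolynomial (Fin (n + 1)) (MvPolynomial (SymIdx n) ℂ)) := by
    apply algHom_ext
    intro q
    show E1 n (rename (liftIdx n) (X q)) = _
    rw [rename_X]
    show (sumAlgEquiv ℂ _ _) (renameEquiv ℂ (eIdx n) (X (liftIdx n q))) = _
    rw [renameEquiv_apply, rename_X, eIdx_liftIdx, sumAlgEquiv_X_inr]
    rfl
  exact AlgHom.congr_fun h c

lemma E1_X_sink (i : Fin (n + 1)) : E1 n (X (sinkIdx n i)) = X i := by
  show (sumAlgEquiv ℂ _ _) (renameEquiv ℂ (eIdx n) (X (sinkIdx n i))) = _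
  rw [renameEquiv_apply, rename_X, eIdx_sinkIdx, sumAlgEquiv_X_inl]

lemma E1_symm_C (c : MvPolynomial (SymIdx n) ℂ) :
    (E1 n).symm (C c) = rename (liftIdx n) c :=
  (E1 n).symm_apply_eq.2 (E1_rename_lift c).symm

lemma E1_symm_X (i : Fin (n + 1)) : (E1 n).symm (X i) = X (sinkIdx n i) :=
  (E1 n).symm_apply_eq.2 (E1_X_sink i).symm

lemma E2_rename_emb (g : MvPolynomial (Fin n ⊕ Fin n × Fin n) ℂ) :
    E2 n (rename (embV n) g) = C (rename (embR n) g) := by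
  have h : (E2 n).toAlgHom.comp (rename (embV n)) =
      (IsScalarTower.toAlgHom ℂ (MvPolynomial (RestT n) ℂ)
        (MvPolynomial (Fin (n + 1)) (MvPolynomial (RestT n) ℂ))).comp (rename (embR n)) := by
    apply algHom_ext
    intro x
    show E2 n (rename (embV n) (X x)) = _
    rw [rename_X]
    show (sumAlgEquiv ℂ _ _) (renameEquiv ℂ (eTgt n) (X (embV n x))) = _
    rw [renameEquiv_apply, rename_X, eTgt_embV, sumAlgEquiv_X_inr]
    show C (X (embR n x)) = C (rename (embR n) (X x))
    rw [rename_X]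
  exact AlgHom.congr_fun h g

lemma E2_X_newIdx (i : Fin (n + 1)) : E2 n (X (newIdx n i)) = X i := by
  show (sumAlgEquiv ℂ _ _) (renameEquiv ℂ (eTgt n) (X (newIdx n i))) = _
  rw [renameEquiv_apply, rename_X, eTgt_newIdx, sumAlgEquiv_X_inl]

noncomputable def bfun (n : ℕ) : Fin (n + 1) → MvPolynomial (RestT n) ℂ := fun i =>
  if h : i = Fin.last n then 1 else X (embR n (Sum.inl (i.castPred h)))

lemma bfun_ne_zero (i : Fin (n + 1)) : bfun n i ≠ 0 := by
  unfold bfun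
  split_ifs
  · exact one_ne_zero
  · exact X_ne_zero _

lemma psi'_E1_X (hψ' : IsShortestTrekMap (addSink G) ψ') (i : Fin (n + 1)) :
    E2 n (ψ' ((E1 n).symm (X i))) = C (bfun n i) * X i := by
  rw [E1_symm_X]
  by_cases h : i = Fin.last n
  · subst h
    rw [psi'_X_last hψ']
    have h1 : (X (Sum.inl (Fin.last n)) :
        MvPolynomial (Fin (n + 1) ⊕ Fin (n + 1) × Fin (n + 1)) ℂ) =
        X (newIdx n (Fin.last n)) := by rw [newIdx, if_pos rfl]
    rw [h1, E2_X_newIdx, bfun, dif_pos rfl, map_one, one_mul]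
  · obtain ⟨i0, rfl⟩ := Fin.exists_castSucc_eq.2 h
    rw [psi'_X_sink hψ' i0, map_mul]
    have h1 : (X (Sum.inl i0.castSucc) :
        MvPolynomial (Fin (n + 1) ⊕ Fin (n + 1) × Fin (n + 1)) ℂ) =
        rename (embV n) (X (Sum.inl i0)) := by rw [rename_X]; rfl
    have h2 : (X (Sum.inr (i0.castSucc, Fin.last n)) :
        MvPolynomial (Fin (n + 1) ⊕ Fin (n + 1) × Fin (n + 1)) ℂ) =
        X (newIdx n i0.castSucc) := by rw [newIdx, if_neg (Fin.castSucc_lt_last i0).ne]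
    rw [h1, h2, E2_rename_emb, E2_X_newIdx, rename_X, bfun,
      dif_neg (Fin.castSucc_lt_last i0).ne, Fin.castPred_castSucc]

end StmtAux

theorem stmt12 (n : ℕ) (G : DAG n) (hst : ShortestTreksUnique G.Adj)
    (ψ : MvPolynomial (SymIdx n) ℂ →ₐ[ℂ] MvPolynomial (Fin n ⊕ Fin n × Fin n) ℂ)
    (hψ : IsShortestTrekMap G ψ) :
    ShortestTreksUnique (addSink G).Adj ∧
    ∀ (ψ' : MvPolynomial (SymIdx (n + 1)) ℂ →ₐ[ℂ]
        MvPolynomial (Fin (n + 1) ⊕ Fin (n + 1) × Fin (n + 1)) ℂ),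
      IsShortestTrekMap (addSink G) ψ' →
      RingHom.ker ψ'.toRingHom =
        Ideal.map (MvPolynomial.rename (liftIdx n)).toRingHom (RingHom.ker ψ.toRingHom) ∧
      ∃ B : Set (MvPolynomial (SymIdx (n + 1)) ℂ),
        RingHom.ker ψ'.toRingHom = Ideal.span B ∧
        ∀ f ∈ B, ∀ p ∈ f.vars, p.1.2 ≠ Fin.last n := by
  classical
  refine ⟨StmtAux.addSink_stu hst, ?_⟩
  intro ψ' hψ'
  open StmtAux in
  have hker : RingHom.ker ψ'.toRingHom =
      Ideal.map (MvPolynomial.rename (liftIdx n)).toRingHom (RingHom.ker ψ.toRingHom) := by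
    apply le_antisymm
    · -- the hard inclusion
      intro f hf
      have hf0 : ψ' f = 0 := RingHom.mem_ker.1 hf
      set F : MvPolynomial (Fin (n + 1)) (MvPolynomial (SymIdx n) ℂ) := E1 n f with hF
      -- the composite ring hom
      set Φ : MvPolynomial (Fin (n + 1)) (MvPolynomial (SymIdx n) ℂ) →+*
          MvPolynomial (Fin (n + 1)) (MvPolynomial (RestT n) ℂ) :=
        ((E2 n : MvPolynomial (Fin (n + 1) ⊕ Fin (n + 1) × Fin (n + 1)) ℂ ≃+*
            MvPolynomial (Fin (n + 1)) (MvPolynomial (RestT n) ℂ)).toRingHom.comp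
          (ψ'.toRingHom.comp ((E1 n).symm : MvPolynomial (Fin (n + 1))
            (MvPolynomial (SymIdx n) ℂ) ≃+* MvPolynomial (SymIdx (n + 1)) ℂ).toRingHom)) with hΦ
      have hΦC : ∀ r : MvPolynomial (SymIdx n) ℂ,
          Φ (C r) = C (rename (StmtAux.embR n) (ψ r)) := by
        intro r
        show StmtAux.E2 n (ψ' ((StmtAux.E1 n).symm (C r))) = _
        rw [StmtAux.E1_symm_C, StmtAux.psi'_rename_lift hψ hψ' r, StmtAux.E2_rename_emb]
      have hΦX : ∀ i, Φ (X i) = C (StmtAux.bfun n i) * X i := fun i =>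
        StmtAux.psi'_E1_X hψ' i
      have hzero : Φ F = 0 := by
        show StmtAux.E2 n (ψ' ((StmtAux.E1 n).symm F)) = 0
        rw [hF, (StmtAux.E1 n).symm_apply_apply, hf0, map_zero]
      have hcoeff : ∀ m, ψ (coeff m F) = 0 := by
        intro m
        have h1 := StmtAux.coeff_monomial_hom Φ
          ((rename (StmtAux.embR n)).toRingHom.comp ψ.toRingHom) (StmtAux.bfun n)
          hΦC hΦX F m
        rw [hzero, coeff_zero] at h1
        have hprod : (m.prod fun i e => StmtAux.bfun n i ^ e) ≠ 0 := by
          rw [Finsupp.prod]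
          exact Finset.prod_ne_zero_iff.2 fun i _ => pow_ne_zero _ (StmtAux.bfun_ne_zero i)
        have h2 : rename (StmtAux.embR n) (ψ (coeff m F)) = 0 :=
          (mul_eq_zero.1 h1.symm).resolve_right hprod
        exact rename_injective _ (StmtAux.embR_injective n)
          (by rw [h2, map_zero])
      have hfeq : f = (StmtAux.E1 n).symm F := by rw [hF, (StmtAux.E1 n).symm_apply_apply]
      rw [hfeq, F.as_sum, map_sum]
      refine Ideal.sum_mem _ fun m _ => ?_
      rw [monomial_eq, map_mul, StmtAux.E1_symm_C]
      exact Ideal.mul_mem_right _ _ (Ideal.mem_map_of_mem _ (RingHom.mem_ker.2 (hcoeff m)))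
    · rw [Ideal.map_le_iff_le_comap]
      intro c hc
      have hc0 : ψ c = 0 := RingHom.mem_ker.1 hc
      refine Ideal.mem_comap.2 (RingHom.mem_ker.2 ?_)
      show ψ' (rename (liftIdx n) c) = 0
      rw [StmtAux.psi'_rename_lift hψ hψ' c, hc0, map_zero]
  refine ⟨hker, ⟨⇑(MvPolynomial.rename (liftIdx n)).toRingHom ''
      (RingHom.ker ψ.toRingHom : Set (MvPolynomial (SymIdx n) ℂ)), ?_, ?_⟩⟩
  · rw [hker]
    rfl
  · rintro f ⟨g, -, rfl⟩ p hp
    have := MvPolynomial.vars_rename (liftIdx n) g hp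
    obtain ⟨q, -, rfl⟩ := Finset.mem_image.1 this
    exact (Fin.castSucc_lt_last _).ne
end

section
/- Let $G$ be the DAG on vertices $\{1,2,3,4\}$ with edges $1\to 2$, $2\to 3$, $2\to 4$, $3\to 4$. Then the kernel of the shortest trek map $\psi_G$ (with $\psi_G(\sigma_{11})=a_1$, $\psi_G(\sigma_{12})=a_1\lambda_{12}$, $\psi_G(\sigma_{13})=a_1\lambda_{12}\lambda_{23}$, $\psi_G(\sigma_{14})=a_1\lambda_{12}\lambda_{24}$, $\psi_G(\sigma_{22})=a_2$, $\psi_G(\sigma_{23})=a_2\lambda_{23}$, $\psi_G(\sigma_{24})=a_2\lambda_{24}$, $\psi_G(\sigma_{33})=a_3$, $\psi_G(\sigma_{34})=a_2\lambda_{34}$, $\psi_G(\sigma_{44})=a_4$) equals the ideal $\langle \sigma_{12}\sigma_{23}-\sigma_{13}\sigma_{22},\ \sigma_{12}\sigma_{24}-\sigma_{14}\sigma_{22},\ \sigma_{13}\sigma_{24}-\sigma_{14}\sigma_{23} \rangle$ in $\mathbb{C}[\sigma_{ij} : 1\le i \le j \le 4]$. -/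
open MvPolynomial

/-- Index type for the indeterminates `σ_{ij}`, `1 ≤ i ≤ j ≤ 4` (vertices `1,2,3,4`
are represented by `0,1,2,3 : Fin 4`). -/
abbrev SymIdx4 := {p : Fin 4 × Fin 4 // p.1 ≤ p.2}

/-- The parameter `a_i`. -/
noncomputable def av (i : Fin 4) : MvPolynomial (Fin 4 ⊕ Fin 4 × Fin 4) ℂ := X (Sum.inl i)

/-- The parameter `λ_{ij}`. -/
noncomputable def la (i j : Fin 4) : MvPolynomial (Fin 4 ⊕ Fin 4 × Fin 4) ℂ :=
  X (Sum.inr (i, j))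

/-- The shortest trek map of the DAG on `{1,2,3,4}` with edges
`1→2, 2→3, 2→4, 3→4` (here relabelled `0,1,2,3`), given by its explicit values. -/
noncomputable def psiEx : MvPolynomial SymIdx4 ℂ →ₐ[ℂ] MvPolynomial (Fin 4 ⊕ Fin 4 × Fin 4) ℂ :=
  aeval fun p =>
    if p.1 = ((0 : Fin 4), (0 : Fin 4)) then av 0
    else if p.1 = (0, 1) then av 0 * la 0 1
    else if p.1 = (0, 2) then av 0 * la 0 1 * la 1 2
    else if p.1 = (0, 3) then av 0 * la 0 1 * la 1 3
    else if p.1 = (1, 1) then av 1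
    else if p.1 = (1, 2) then av 1 * la 1 2
    else if p.1 = (1, 3) then av 1 * la 1 3
    else if p.1 = (2, 2) then av 2
    else if p.1 = (2, 3) then av 1 * la 2 3
    else av 3

/-- The indeterminate `σ_{ij}`. -/
noncomputable def sg (i j : Fin 4) (h : i ≤ j) : MvPolynomial SymIdx4 ℂ := X ⟨(i, j), h⟩

namespace Stmt15Aux

/-! ### The ten indices -/

def i00 : SymIdx4 := ⟨(0,0), by decide⟩
def i01 : SymIdx4 := ⟨(0,1), by decide⟩
def i02 : SymIdx4 := ⟨(0,2), by decide⟩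
def i03 : SymIdx4 := ⟨(0,3), by decide⟩
def i11 : SymIdx4 := ⟨(1,1), by decide⟩
def i12 : SymIdx4 := ⟨(1,2), by decide⟩
def i13 : SymIdx4 := ⟨(1,3), by decide⟩
def i22 : SymIdx4 := ⟨(2,2), by decide⟩
def i23 : SymIdx4 := ⟨(2,3), by decide⟩
def i33 : SymIdx4 := ⟨(3,3), by decide⟩

lemma sumUniv {M : Type*} [AddCommMonoid M] (g : SymIdx4 → M) :
    ∑ s : SymIdx4, g s =
      g i00 + g i01 + g i02 + g i03 + g i11 + g i12 + g i13 + g i22 + g i23 + g i33 := by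
  rw [show (Finset.univ : Finset SymIdx4) =
    ({i00, i01, i02, i03, i11, i12, i13, i22, i23, i33} : Finset SymIdx4) by decide]
  rw [Finset.sum_insert (by decide), Finset.sum_insert (by decide),
    Finset.sum_insert (by decide), Finset.sum_insert (by decide), Finset.sum_insert (by decide),
    Finset.sum_insert (by decide), Finset.sum_insert (by decide), Finset.sum_insert (by decide),
    Finset.sum_insert (by decide), Finset.sum_singleton]
  simp only [add_assoc]

/-! ### Exponent vectors -/

noncomputable def ea (i : Fin 4) : (Fin 4 ⊕ Fin 4 × Fin 4) →₀ ℕ := Finsupp.single (Sum.inl i) 1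
noncomputable def el (i j : Fin 4) : (Fin 4 ⊕ Fin 4 × Fin 4) →₀ ℕ :=
  Finsupp.single (Sum.inr (i, j)) 1

noncomputable def E (p : SymIdx4) : (Fin 4 ⊕ Fin 4 × Fin 4) →₀ ℕ :=
  if p.1 = ((0 : Fin 4), (0 : Fin 4)) then ea 0
  else if p.1 = (0, 1) then ea 0 + el 0 1
  else if p.1 = (0, 2) then ea 0 + el 0 1 + el 1 2
  else if p.1 = (0, 3) then ea 0 + el 0 1 + el 1 3
  else if p.1 = (1, 1) then ea 1
  else if p.1 = (1, 2) then ea 1 + el 1 2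
  else if p.1 = (1, 3) then ea 1 + el 1 3
  else if p.1 = (2, 2) then ea 2
  else if p.1 = (2, 3) then ea 1 + el 2 3
  else ea 3

lemma E_i00 : E i00 = ea 0 := by rw [E, if_pos (by decide)]
lemma E_i01 : E i01 = ea 0 + el 0 1 := by
  rw [E, if_neg (by decide), if_pos (by decide)]
lemma E_i02 : E i02 = ea 0 + el 0 1 + el 1 2 := by
  rw [E, if_neg (by decide), if_neg (by decide), if_pos (by decide)]
lemma E_i03 : E i03 = ea 0 + el 0 1 + el 1 3 := by
  rw [E, if_neg (by decide), if_neg (by decide), if_neg (by decide), if_pos (by decide)]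
lemma E_i11 : E i11 = ea 1 := by
  rw [E, if_neg (by decide), if_neg (by decide), if_neg (by decide), if_neg (by decide),
    if_pos (by decide)]
lemma E_i12 : E i12 = ea 1 + el 1 2 := by
  rw [E, if_neg (by decide), if_neg (by decide), if_neg (by decide), if_neg (by decide),
    if_neg (by decide), if_pos (by decide)]
lemma E_i13 : E i13 = ea 1 + el 1 3 := by
  rw [E, if_neg (by decide), if_neg (by decide), if_neg (by decide), if_neg (by decide),
    if_neg (by decide), if_neg (by decide), if_pos (by decide)]
lemma E_i22 : E i22 = ea 2 := by
  rw [E, if_neg (by decide), if_neg (by decide), if_neg (by decide), if_neg (by decide),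
    if_neg (by decide), if_neg (by decide), if_neg (by decide), if_pos (by decide)]
lemma E_i23 : E i23 = ea 1 + el 2 3 := by
  rw [E, if_neg (by decide), if_neg (by decide), if_neg (by decide), if_neg (by decide),
    if_neg (by decide), if_neg (by decide), if_neg (by decide), if_neg (by decide),
    if_pos (by decide)]
lemma E_i33 : E i33 = ea 3 := by
  rw [E, if_neg (by decide), if_neg (by decide), if_neg (by decide), if_neg (by decide),
    if_neg (by decide), if_neg (by decide), if_neg (by decide), if_neg (by decide),
    if_neg (by decide)]

set_option maxHeartbeats 1000000 in
lemma psiEx_X (s : SymIdx4) : psiEx (X s) = monomial (E s) 1 := by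
  rw [psiEx, aeval_X, E]
  split_ifs <;>
    simp [av, la, ea, el, X, monomial_mul]

/-! ### The additive map on exponents -/

noncomputable def T (d : SymIdx4 →₀ ℕ) : (Fin 4 ⊕ Fin 4 × Fin 4) →₀ ℕ :=
  d.sum fun s k => k • E s

lemma T_add (d e : SymIdx4 →₀ ℕ) : T (d + e) = T d + T e := by
  unfold T
  exact Finsupp.sum_add_index (by simp) (by intros; rw [add_smul])

lemma T_single (s : SymIdx4) (k : ℕ) : T (Finsupp.single s k) = k • E s := by
  unfold T
  rw [Finsupp.sum_single_index]
  simp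

lemma T_apply (d : SymIdx4 →₀ ℕ) (x : Fin 4 ⊕ Fin 4 × Fin 4) :
    T d x = ∑ s : SymIdx4, d s * E s x := by
  unfold T
  rw [Finsupp.sum_apply, Finsupp.sum_fintype]
  · simp [Finsupp.smul_apply]
  · intro s; simp

lemma psi_monomial (d : SymIdx4 →₀ ℕ) (c : ℂ) :
    psiEx (monomial d c) = monomial (T d) c := by
  induction d using Finsupp.induction with
  | zero =>
      rw [show T 0 = 0 by unfold T; simp]
      simp only [monomial_zero']
      rw [show (C c : MvPolynomial SymIdx4 ℂ) = algebraMap ℂ _ c by rfl]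
      simp [AlgHom.commutes, algebraMap_eq]
  | single_add a b f ha hb ih =>
      rw [monomial_single_add, map_mul, map_pow, psiEx_X, ih, monomial_pow, one_pow,
        monomial_mul, one_mul, T_add, T_single]

/-! ### Standard monomials and injectivity -/

def Std (d : SymIdx4 →₀ ℕ) : Prop :=
  (d i02 = 0 ∨ d i11 = 0) ∧ (d i03 = 0 ∨ d i11 = 0) ∧ (d i03 = 0 ∨ d i12 = 0)

lemma w1 (d : SymIdx4 →₀ ℕ) : T d (Sum.inl 0) = d i00 + d i01 + d i02 + d i03 := by
  rw [T_apply, sumUniv, E_i00, E_i01, E_i02, E_i03, E_i11, E_i12, E_i13, E_i22, E_i23, E_i33]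
  simp (config := { decide := true }) [ea, el, Finsupp.single_apply]

lemma w2 (d : SymIdx4 →₀ ℕ) :
    T d (Sum.inl 1) = d i11 + d i12 + d i13 + d i23 := by
  rw [T_apply, sumUniv, E_i00, E_i01, E_i02, E_i03, E_i11, E_i12, E_i13, E_i22, E_i23, E_i33]
  simp (config := { decide := true }) [ea, el, Finsupp.single_apply]

lemma w3 (d : SymIdx4 →₀ ℕ) : T d (Sum.inl 2) = d i22 := by
  rw [T_apply, sumUniv, E_i00, E_i01, E_i02, E_i03, E_i11, E_i12, E_i13, E_i22, E_i23, E_i33]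
  simp (config := { decide := true }) [ea, el, Finsupp.single_apply]

lemma w4 (d : SymIdx4 →₀ ℕ) : T d (Sum.inl 3) = d i33 := by
  rw [T_apply, sumUniv, E_i00, E_i01, E_i02, E_i03, E_i11, E_i12, E_i13, E_i22, E_i23, E_i33]
  simp (config := { decide := true }) [ea, el, Finsupp.single_apply]

lemma w5 (d : SymIdx4 →₀ ℕ) : T d (Sum.inr (0, 1)) = d i01 + d i02 + d i03 := by
  rw [T_apply, sumUniv, E_i00, E_i01, E_i02, E_i03, E_i11, E_i12, E_i13, E_i22, E_i23, E_i33]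
  simp (config := { decide := true }) [ea, el, Finsupp.single_apply]

lemma w6 (d : SymIdx4 →₀ ℕ) : T d (Sum.inr (1, 2)) = d i02 + d i12 := by
  rw [T_apply, sumUniv, E_i00, E_i01, E_i02, E_i03, E_i11, E_i12, E_i13, E_i22, E_i23, E_i33]
  simp (config := { decide := true }) [ea, el, Finsupp.single_apply]

lemma w7 (d : SymIdx4 →₀ ℕ) : T d (Sum.inr (1, 3)) = d i03 + d i13 := by
  rw [T_apply, sumUniv, E_i00, E_i01, E_i02, E_i03, E_i11, E_i12, E_i13, E_i22, E_i23, E_i33]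
  simp (config := { decide := true }) [ea, el, Finsupp.single_apply]

lemma w8 (d : SymIdx4 →₀ ℕ) : T d (Sum.inr (2, 3)) = d i23 := by
  rw [T_apply, sumUniv, E_i00, E_i01, E_i02, E_i03, E_i11, E_i12, E_i13, E_i22, E_i23, E_i33]
  simp (config := { decide := true }) [ea, el, Finsupp.single_apply]

lemma enumSymIdx4 : ∀ s : SymIdx4, s = i00 ∨ s = i01 ∨ s = i02 ∨ s = i03 ∨ s = i11 ∨
    s = i12 ∨ s = i13 ∨ s = i22 ∨ s = i23 ∨ s = i33 := by decide

lemma T_inj {d d' : SymIdx4 →₀ ℕ} (hd : Std d) (hd' : Std d') (h : T d = T d') : d = d' := by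
  have h1 : d i00 + d i01 + d i02 + d i03 = d' i00 + d' i01 + d' i02 + d' i03 := by
    have := DFunLike.congr_fun h (Sum.inl 0); rwa [w1, w1] at this
  have h2 : d i11 + d i12 + d i13 + d i23 = d' i11 + d' i12 + d' i13 + d' i23 := by
    have := DFunLike.congr_fun h (Sum.inl 1); rwa [w2, w2] at this
  have h3 : d i22 = d' i22 := by
    have := DFunLike.congr_fun h (Sum.inl 2); rwa [w3, w3] at this
  have h4 : d i33 = d' i33 := by
    have := DFunLike.congr_fun h (Sum.inl 3); rwa [w4, w4] at this
  have h5 : d i01 + d i02 + d i03 = d' i01 + d' i02 + d' i03 := by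
    have := DFunLike.congr_fun h (Sum.inr (0, 1)); rwa [w5, w5] at this
  have h6 : d i02 + d i12 = d' i02 + d' i12 := by
    have := DFunLike.congr_fun h (Sum.inr (1, 2)); rwa [w6, w6] at this
  have h7 : d i03 + d i13 = d' i03 + d' i13 := by
    have := DFunLike.congr_fun h (Sum.inr (1, 3)); rwa [w7, w7] at this
  have h8 : d i23 = d' i23 := by
    have := DFunLike.congr_fun h (Sum.inr (2, 3)); rwa [w8, w8] at this
  obtain ⟨a1, a2, a3⟩ := hd
  obtain ⟨b1, b2, b3⟩ := hd'
  ext s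
  rcases enumSymIdx4 s with rfl | rfl | rfl | rfl | rfl | rfl | rfl | rfl | rfl | rfl <;> omega

/-! ### The submodule of standard polynomials -/

noncomputable def S : Submodule ℂ (MvPolynomial SymIdx4 ℂ) where
  carrier := {f | ∀ m ∈ f.support, Std m}
  add_mem' := by
    intro f g hf hg m hm
    rcases Finset.mem_union.mp (MvPolynomial.support_add hm) with h | h
    · exact hf m h
    · exact hg m h
  zero_mem' := by intro m hm; simp at hm
  smul_mem' := by
    intro c f hf m hm
    exact hf m (MvPolynomial.support_smul hm)

lemma monomial_mem_S {d : SymIdx4 →₀ ℕ} (hd : Std d) (c : ℂ) : monomial d c ∈ S := by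
  intro m hm
  rw [support_monomial] at hm
  split at hm
  · simp at hm
  · rw [Finset.mem_singleton] at hm; subst hm; exact hd

lemma S_inj {n : MvPolynomial SymIdx4 ℂ} (hn : n ∈ S) (h0 : psiEx n = 0) : n = 0 := by
  apply MvPolynomial.ext
  intro d0
  rw [coeff_zero]
  by_cases hd0 : d0 ∈ n.support
  · have key : coeff (T d0) (psiEx n) = coeff d0 n := by
      conv_lhs => rw [as_sum n]
      rw [map_sum]
      simp only [psi_monomial]
      rw [MvPolynomial.coeff_sum]
      rw [Finset.sum_eq_single_of_mem d0 hd0]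
      · rw [coeff_monomial, if_pos rfl]
      · intro d hd hne
        rw [coeff_monomial, if_neg]
        intro hTd
        exact hne (T_inj (hn d hd) (hn d0 hd0) hTd)
    rw [h0, coeff_zero] at key
    exact key.symm
  · exact notMem_support_iff.mp hd0

/-! ### The ideal and the measure -/

noncomputable def Igens : Set (MvPolynomial SymIdx4 ℂ) :=
  {X i01 * X i12 - X i02 * X i11, X i01 * X i13 - X i03 * X i11, X i02 * X i13 - X i03 * X i12}

noncomputable def M : Submodule ℂ (MvPolynomial SymIdx4 ℂ) :=
  (Ideal.span Igens).restrictScalars ℂ ⊔ S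

lemma ideal_mem_M {f : MvPolynomial SymIdx4 ℂ} (hf : f ∈ Ideal.span Igens) : f ∈ M :=
  Submodule.mem_sup_left hf

lemma S_mem_M {f : MvPolynomial SymIdx4 ℂ} (hf : f ∈ S) : f ∈ M :=
  Submodule.mem_sup_right hf

def mu (d : SymIdx4 →₀ ℕ) : ℕ := d i02 + 3 * d i03 + 3 * d i11 + d i12

lemma mu_add (x y : SymIdx4 →₀ ℕ) : mu (x + y) = mu x + mu y := by
  simp only [mu, Finsupp.add_apply]; ring

lemma pair_le {d : SymIdx4 →₀ ℕ} {p q : SymIdx4} (hpq : p ≠ q) (hp : 1 ≤ d p) (hq : 1 ≤ d q) :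
    Finsupp.single p 1 + Finsupp.single q 1 ≤ d := by
  rw [Finsupp.le_def]
  intro s
  rw [Finsupp.add_apply, Finsupp.single_apply, Finsupp.single_apply]
  rcases eq_or_ne p s with rfl | h1
  · rw [if_pos rfl, if_neg (fun hh => hpq hh.symm)]
    omega
  · rw [if_neg h1]
    rcases eq_or_ne q s with rfl | h2
    · rw [if_pos rfl]; omega
    · rw [if_neg h2]; omega

lemma mu_sub (d e : SymIdx4 →₀ ℕ) (h : e ≤ d) : mu (d - e) + mu e = mu d := by
  rw [← mu_add, tsub_add_cancel_of_le h]

lemma mu_e1 : mu (Finsupp.single i02 1 + Finsupp.single i11 1) = 4 := by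
  simp (config := { decide := true }) [mu, Finsupp.add_apply, Finsupp.single_apply]
lemma mu_f1 : mu (Finsupp.single i01 1 + Finsupp.single i12 1) = 1 := by
  simp (config := { decide := true }) [mu, Finsupp.add_apply, Finsupp.single_apply]
lemma mu_e2 : mu (Finsupp.single i03 1 + Finsupp.single i11 1) = 6 := by
  simp (config := { decide := true }) [mu, Finsupp.add_apply, Finsupp.single_apply]
lemma mu_f2 : mu (Finsupp.single i01 1 + Finsupp.single i13 1) = 0 := by
  simp (config := { decide := true }) [mu, Finsupp.add_apply, Finsupp.single_apply]
lemma mu_e3 : mu (Finsupp.single i03 1 + Finsupp.single i12 1) = 4 := by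
  simp (config := { decide := true }) [mu, Finsupp.add_apply, Finsupp.single_apply]
lemma mu_f3 : mu (Finsupp.single i02 1 + Finsupp.single i13 1) = 1 := by
  simp (config := { decide := true }) [mu, Finsupp.add_apply, Finsupp.single_apply]

lemma mono_decomp (d : SymIdx4 →₀ ℕ) (c : ℂ) (p q r t : SymIdx4) (hpq : p ≠ q)
    (hp : 1 ≤ d p) (hq : 1 ≤ d q) :
    monomial d c
      = monomial (d - (Finsupp.single p 1 + Finsupp.single q 1)
            + (Finsupp.single r 1 + Finsupp.single t 1)) c
        + monomial (d - (Finsupp.single p 1 + Finsupp.single q 1)) c * (X p * X q - X r * X t) := by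
  have h := tsub_add_cancel_of_le (pair_le hpq hp hq)
  have h1 : monomial (d - (Finsupp.single p 1 + Finsupp.single q 1)) c * (X p * X q)
      = monomial d c := by
    simp only [X, monomial_mul, mul_one, add_assoc]
    rw [h]
  have h2 : monomial (d - (Finsupp.single p 1 + Finsupp.single q 1)) c * (X r * X t)
      = monomial (d - (Finsupp.single p 1 + Finsupp.single q 1)
          + (Finsupp.single r 1 + Finsupp.single t 1)) c := by
    simp only [X, monomial_mul, mul_one, add_assoc]
  rw [mul_sub, h1, h2]
  ring

lemma monomial_mem_M : ∀ (n : ℕ) (d : SymIdx4 →₀ ℕ) (c : ℂ), mu d ≤ n → monomial d c ∈ M := by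
  intro n
  induction n with
  | zero =>
    intro d c h
    apply S_mem_M (monomial_mem_S ?_ c)
    have h0 : mu d = 0 := Nat.le_zero.mp h
    unfold mu at h0
    exact ⟨Or.inl (by omega), Or.inl (by omega), Or.inl (by omega)⟩
  | succ n ih =>
    intro d c h
    by_cases hstd : Std d
    · exact S_mem_M (monomial_mem_S hstd c)
    · have key : (1 ≤ d i02 ∧ 1 ≤ d i11) ∨ (1 ≤ d i03 ∧ 1 ≤ d i11) ∨
          (1 ≤ d i03 ∧ 1 ≤ d i12) := by
        by_contra hc
        exact hstd ⟨by omega, by omega, by omega⟩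
      rcases key with ⟨hp, hq⟩ | ⟨hp, hq⟩ | ⟨hp, hq⟩
      · rw [mono_decomp d c i02 i11 i01 i12 (by decide) hp hq]
        apply M.add_mem
        · apply ih
          have hmu := mu_sub d _ (pair_le (show i02 ≠ i11 by decide) hp hq)
          rw [mu_e1] at hmu
          rw [mu_add, mu_f1]
          omega
        · apply ideal_mem_M
          rw [show (X i02 * X i11 - X i01 * X i12 : MvPolynomial SymIdx4 ℂ)
              = -(X i01 * X i12 - X i02 * X i11) by ring, mul_neg]
          exact neg_mem (Ideal.mul_mem_left _ _ (Ideal.subset_span (Set.mem_insert _ _)))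
      · rw [mono_decomp d c i03 i11 i01 i13 (by decide) hp hq]
        apply M.add_mem
        · apply ih
          have hmu := mu_sub d _ (pair_le (show i03 ≠ i11 by decide) hp hq)
          rw [mu_e2] at hmu
          rw [mu_add, mu_f2]
          omega
        · apply ideal_mem_M
          rw [show (X i03 * X i11 - X i01 * X i13 : MvPolynomial SymIdx4 ℂ)
              = -(X i01 * X i13 - X i03 * X i11) by ring, mul_neg]
          exact neg_mem (Ideal.mul_mem_left _ _ (Ideal.subset_span
            (Set.mem_insert_of_mem _ (Set.mem_insert _ _))))
      · rw [mono_decomp d c i03 i12 i02 i13 (by decide) hp hq]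
        apply M.add_mem
        · apply ih
          have hmu := mu_sub d _ (pair_le (show i03 ≠ i12 by decide) hp hq)
          rw [mu_e3] at hmu
          rw [mu_add, mu_f3]
          omega
        · apply ideal_mem_M
          rw [show (X i03 * X i12 - X i02 * X i13 : MvPolynomial SymIdx4 ℂ)
              = -(X i02 * X i13 - X i03 * X i12) by ring, mul_neg]
          exact neg_mem (Ideal.mul_mem_left _ _ (Ideal.subset_span
            (Set.mem_insert_of_mem _ (Set.mem_insert_of_mem _ rfl))))

lemma mem_M (f : MvPolynomial SymIdx4 ℂ) : f ∈ M := by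
  rw [as_sum f]
  exact Submodule.sum_mem M fun d _ => monomial_mem_M (mu d) d _ le_rfl

/-! ### The generators are in the kernel -/

lemma gens_ker : ∀ g ∈ Igens, psiEx g = 0 := by
  intro g hg
  have e1 : E i01 + E i12 = E i02 + E i11 := by
    rw [E_i01, E_i12, E_i02, E_i11]; abel
  have e2 : E i01 + E i13 = E i03 + E i11 := by
    rw [E_i01, E_i13, E_i03, E_i11]; abel
  have e3 : E i02 + E i13 = E i03 + E i12 := by
    rw [E_i02, E_i13, E_i03, E_i12]; abel
  simp only [Igens, Set.mem_insert_iff, Set.mem_singleton_iff] at hg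
  rcases hg with rfl | rfl | rfl <;>
    rw [map_sub, map_mul, map_mul, psiEx_X, psiEx_X, psiEx_X, psiEx_X, monomial_mul,
      monomial_mul, sub_eq_zero]
  · rw [e1]
  · rw [e2]
  · rw [e3]

lemma span_le_ker : Ideal.span Igens ≤ RingHom.ker psiEx.toRingHom := by
  rw [Ideal.span_le]
  intro g hg
  exact RingHom.mem_ker.mpr (gens_ker g hg)

lemma main : RingHom.ker psiEx.toRingHom = Ideal.span Igens := by
  apply le_antisymm
  · intro f hf
    rw [RingHom.mem_ker] at hf
    obtain ⟨a, ha, b, hb, hab⟩ := Submodule.mem_sup.mp (mem_M f)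
    have ha' : a ∈ Ideal.span Igens := ha
    have hpa : psiEx a = 0 := RingHom.mem_ker.mp (span_le_ker ha')
    have hpb : psiEx b = 0 := by
      have hf' : psiEx f = 0 := hf
      rw [← hab, map_add, hpa, zero_add] at hf'
      exact hf'
    have hb0 : b = 0 := S_inj hb hpb
    rw [← hab, hb0, add_zero]
    exact ha'
  · exact span_le_ker

end Stmt15Aux

theorem stmt15 :
    RingHom.ker psiEx.toRingHom = Ideal.span
      { sg 0 1 (by decide) * sg 1 2 (by decide) - sg 0 2 (by decide) * sg 1 1 (by decide),
        sg 0 1 (by decide) * sg 1 3 (by decide) - sg 0 3 (by decide) * sg 1 1 (by decide),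
        sg 0 2 (by decide) * sg 1 3 (by decide) - sg 0 3 (by decide) * sg 1 2 (by decide) } :=
  Stmt15Aux.main
end

section
/- Let $G$ be a DAG such that there is at most one simple trek between any two distinct vertices. Then the simple trek rule $\phi_G$, defined by $\phi_G(\sigma_{ij}) = \sum_{P \in T(i,j)} a_{\mathrm{top}(P)} \prod_{(k,l) \in P} \lambda_{kl}$, sends every indeterminate $\sigma_{ij}$ to a monomial or to zero; consequently the kernel of $\phi_G$ is a toric ideal (generated by monomials and binomials). -/
open MvPolynomial

open scoped Classical

section ToricAux

variable {σ τ : Type*}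

private lemma prod_X_isMon (l : List τ) :
    ∃ d : τ →₀ ℕ, (l.map fun e => (X e : MvPolynomial τ ℂ)).prod = monomial d 1 := by
  induction l with
  | nil => exact ⟨0, by simp⟩
  | cons a l ih =>
    obtain ⟨d, hd⟩ := ih
    refine ⟨Finsupp.single a 1 + d, ?_⟩
    rw [List.map_cons, List.prod_cons, hd, X, monomial_mul, one_mul]

private lemma phi_mon (φ : MvPolynomial σ ℂ →ₐ[ℂ] MvPolynomial τ ℂ)
    (h : ∀ p, φ (X p) = 0 ∨ ∃ d, φ (X p) = monomial d 1) (u : σ →₀ ℕ) :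
    φ (monomial u 1) = 0 ∨ ∃ d, φ (monomial u 1) = monomial d (1 : ℂ) := by
  rw [← prod_X_pow_eq_monomial, map_prod]
  refine Finset.prod_induction _ (fun g => g = 0 ∨ ∃ d, g = monomial d 1) ?_ ?_ ?_
  · rintro a b (ha | ⟨d, hd⟩) hb
    · left; simp [ha]
    · rcases hb with hb | ⟨e, he⟩
      · left; simp [hb]
      · right; exact ⟨d + e, by rw [hd, he, monomial_mul, one_mul]⟩
  · right; exact ⟨0, by simp⟩
  · intro p hp
    rw [map_pow]
    rcases h p with h0 | ⟨d, hd⟩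
    · left; rw [h0, zero_pow (Finsupp.mem_support_iff.mp hp)]
    · right; exact ⟨u p • d, by rw [hd, monomial_pow, one_pow]⟩

private lemma coeff_phi (φ : MvPolynomial σ ℂ →ₐ[ℂ] MvPolynomial τ ℂ)
    (h : ∀ p, φ (X p) = 0 ∨ ∃ d, φ (X p) = monomial d 1) (f : MvPolynomial σ ℂ) (d : τ →₀ ℕ) :
    coeff d (φ f) =
      ∑ v ∈ f.support.filter (fun v => φ (monomial v 1) = monomial d 1), coeff v f := by
  have hf : φ f = ∑ v ∈ f.support, coeff v f • φ (monomial v 1) := by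
    conv_lhs => rw [f.as_sum]
    rw [map_sum]
    refine Finset.sum_congr rfl fun v _ => ?_
    rw [← map_smul, smul_monomial, smul_eq_mul, mul_one]
  rw [hf, coeff_sum, Finset.sum_filter]
  refine Finset.sum_congr rfl fun v _ => ?_
  rw [coeff_smul, smul_eq_mul]
  rcases phi_mon φ h v with h0 | ⟨e, he⟩
  · rw [h0]
    have : ¬ ((0 : MvPolynomial τ ℂ) = monomial d 1) := by
      intro hh
      have := (monomial_eq_zero).mp hh.symm
      exact one_ne_zero this
    simp [this]
  · rw [he, coeff_monomial]
    by_cases hed : e = d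
    · subst hed; simp
    · have : ¬ ((monomial e 1 : MvPolynomial τ ℂ) = monomial d 1) := by
        intro hh
        rcases (monomial_eq_monomial_iff _ _ _ _).mp hh with ⟨h1, _⟩ | ⟨h1, _⟩
        · exact hed h1
        · exact one_ne_zero h1
      simp [this, hed]

private lemma toric_ker (φ : MvPolynomial σ ℂ →ₐ[ℂ] MvPolynomial τ ℂ)
    (h : ∀ p, φ (X p) = 0 ∨ ∃ d, φ (X p) = monomial d 1) :
    ∃ B : Set (MvPolynomial σ ℂ), RingHom.ker φ.toRingHom = Ideal.span B ∧
      ∀ f ∈ B, (∃ u : σ →₀ ℕ, f = monomial u 1) ∨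
        ∃ u v : σ →₀ ℕ, f = monomial u 1 - monomial v 1 := by
  set B : Set (MvPolynomial σ ℂ) := {g | φ g = 0 ∧
    ((∃ u : σ →₀ ℕ, g = monomial u 1) ∨ ∃ u v : σ →₀ ℕ, g = monomial u 1 - monomial v 1)} with hB
  refine ⟨B, ?_, fun f hf => hf.2⟩
  have hker : ∀ N : ℕ, ∀ f : MvPolynomial σ ℂ, f.support.card ≤ N → φ f = 0 →
      f ∈ Ideal.span B := by
    intro N
    induction N with
    | zero =>
      intro f hcard _
      have : f = 0 := support_eq_empty.mp (Finset.card_eq_zero.mp (Nat.le_zero.mp hcard))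
      simp [this]
    | succ N ih =>
      intro f hcard hkf
      by_cases hf0 : f = 0
      · simp [hf0]
      obtain ⟨u, hu⟩ : f.support.Nonempty := support_nonempty.mpr hf0
      set c := coeff u f with hc
      have hcne : c ≠ 0 := mem_support_iff.mp hu
      rcases phi_mon φ h u with h0 | ⟨d, hd⟩
      · set g := f - monomial u c with hg
        have hgker : φ g = 0 := by
          have hmc : (monomial u c : MvPolynomial σ ℂ) = c • monomial u 1 := by
            rw [smul_monomial, smul_eq_mul, mul_one]
          rw [hg, map_sub, hkf, zero_sub, hmc, map_smul, h0, smul_zero, neg_zero]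
        have hsupp : g.support ⊆ f.support.erase u := by
          intro w hw
          have hw' := mem_support_iff.mp hw
          have hwu : w ≠ u := by
            rintro rfl
            apply hw'
            rw [hg, coeff_sub, coeff_monomial, if_pos rfl, ← hc, sub_self]
          refine Finset.mem_erase.mpr ⟨hwu, mem_support_iff.mpr fun hwf0 => ?_⟩
          apply hw'
          rw [hg, coeff_sub, coeff_monomial, if_neg (fun hh => hwu hh.symm), hwf0, sub_zero]
        have hgcard : g.support.card ≤ N := by
          have h1 := Finset.card_le_card hsupp
          rw [Finset.card_erase_of_mem hu] at h1
          omega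
        have hmem : (monomial u 1 : MvPolynomial σ ℂ) ∈ Ideal.span B := by
          refine Ideal.subset_span ?_
          exact ⟨by rw [h0], Or.inl ⟨u, rfl⟩⟩
        have hfe : f = g + C c * monomial u 1 := by rw [hg, C_mul_monomial, mul_one]; ring
        rw [hfe]
        exact Ideal.add_mem _ (ih g hgcard hgker) (Ideal.mul_mem_left _ _ hmem)
      · set S := f.support.filter (fun v => φ (monomial v 1) = monomial d 1) with hS
        have hsum : ∑ v ∈ S, coeff v f = 0 := by
          rw [hS, ← coeff_phi φ h f d, hkf, coeff_zero]
        have huS : u ∈ S := Finset.mem_filter.mpr ⟨hu, hd⟩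
        obtain ⟨v, hvS, hvu⟩ : ∃ v ∈ S, v ≠ u := by
          by_contra hcon
          push_neg at hcon
          have hSu : S = {u} :=
            Finset.eq_singleton_iff_unique_mem.mpr ⟨huS, fun x hx => hcon x hx⟩
          rw [hSu, Finset.sum_singleton, ← hc] at hsum
          exact hcne hsum
        have hvd : φ (monomial v 1) = monomial d 1 := (Finset.mem_filter.mp hvS).2
        have hvf : v ∈ f.support := (Finset.mem_filter.mp hvS).1
        set b := (monomial u 1 - monomial v 1 : MvPolynomial σ ℂ) with hb
        have hbker : φ b = 0 := by rw [hb, map_sub, hd, hvd, sub_self]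
        have hbmem : b ∈ Ideal.span B := Ideal.subset_span ⟨hbker, Or.inr ⟨u, v, rfl⟩⟩
        set g := f - C c * b with hg
        have hgker : φ g = 0 := by
          rw [hg, map_sub, map_mul, hbker, mul_zero, hkf, sub_zero]
        have hsupp : g.support ⊆ f.support.erase u := by
          intro w hw
          have hw' := mem_support_iff.mp hw
          have hwu : w ≠ u := by
            rintro rfl
            apply hw'
            rw [hg, hb, coeff_sub, coeff_C_mul, coeff_sub, coeff_monomial, coeff_monomial,
              if_pos rfl, if_neg hvu, ← hc]
            ring
          refine Finset.mem_erase.mpr ⟨hwu, ?_⟩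
          by_cases hwv : w = v
          · exact hwv ▸ hvf
          · refine mem_support_iff.mpr fun hwf0 => ?_
            apply hw'
            rw [hg, hb, coeff_sub, coeff_C_mul, coeff_sub, coeff_monomial, coeff_monomial,
              hwf0, if_neg (fun hh => hwu hh.symm), if_neg (fun hh => hwv hh.symm)]
            ring
        have hgcard : g.support.card ≤ N := by
          have h1 := Finset.card_le_card hsupp
          rw [Finset.card_erase_of_mem hu] at h1
          omega
        have hfe : f = g + C c * b := by rw [hg]; ring
        rw [hfe]
        exact Ideal.add_mem _ (ih g hgcard hgker) (Ideal.mul_mem_left _ _ hbmem)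
  refine le_antisymm ?_ ?_
  · intro f hf
    exact hker f.support.card f le_rfl (RingHom.mem_ker.mp hf)
  · rw [Ideal.span_le]
    intro f hf
    exact RingHom.mem_ker.mpr hf.1

end ToricAux

private lemma trekMonomial_isMon {n : ℕ} {Adj : Fin n → Fin n → Prop} {i j : Fin n}
    (t : Trek Adj i j) :
    ∃ d : (Fin n ⊕ Fin n × Fin n) →₀ ℕ, trekMonomial t = monomial d (1 : ℂ) := by
  obtain ⟨d, hd⟩ := prod_X_isMon (t.edges.map Sum.inr)
  refine ⟨Finsupp.single (Sum.inl t.top) 1 + d, ?_⟩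
  rw [trekMonomial]
  have : (t.edges.map fun e => (X (Sum.inr e) : MvPolynomial (Fin n ⊕ Fin n × Fin n) ℂ)) =
      ((t.edges.map Sum.inr).map fun e => (X e : MvPolynomial (Fin n ⊕ Fin n × Fin n) ℂ)) := by
    rw [List.map_map]; rfl
  rw [this, hd, X, monomial_mul, one_mul]

theorem stmt16 (n : ℕ) (G : DAG n)
    (huniq : ∀ i j : Fin n, i ≠ j → Subsingleton (Trek G.Adj i j))
    (φ : MvPolynomial (SymIdx n) ℂ →ₐ[ℂ] MvPolynomial (Fin n ⊕ Fin n × Fin n) ℂ)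
    (hφ0 : ∀ p : SymIdx n, IsEmpty (Trek G.Adj p.1.1 p.1.2) → φ (X p) = 0)
    (hφ1 : ∀ p : SymIdx n, ∀ t : Trek G.Adj p.1.1 p.1.2, φ (X p) = trekMonomial t) :
    (∀ p : SymIdx n, φ (X p) = 0 ∨
      ∃ d : (Fin n ⊕ Fin n × Fin n) →₀ ℕ, φ (X p) = monomial d 1) ∧
    ∃ B : Set (MvPolynomial (SymIdx n) ℂ),
      RingHom.ker φ.toRingHom = Ideal.span B ∧
      ∀ f ∈ B, (∃ u : SymIdx n →₀ ℕ, f = monomial u 1) ∨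
        ∃ u v : SymIdx n →₀ ℕ, f = monomial u 1 - monomial v 1 := by
  have h : ∀ p : SymIdx n, φ (X p) = 0 ∨
      ∃ d : (Fin n ⊕ Fin n × Fin n) →₀ ℕ, φ (X p) = monomial d 1 := by
    intro p
    by_cases hE : Nonempty (Trek G.Adj p.1.1 p.1.2)
    · obtain ⟨t⟩ := hE
      obtain ⟨d, hdm⟩ := trekMonomial_isMon t
      exact Or.inr ⟨d, (hφ1 p t).trans hdm⟩
    · exact Or.inl (hφ0 p (not_nonempty_iff.mp hE))
  exact ⟨h, toric_ker φ h⟩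
end

section
/- Let $M$ be an integer matrix with nonnegative nonzero columns defining a monomial map, and let $\mathcal{F} \subseteq \ker_{\mathbb{Z}}(M)$ be a finite set. Then the binomials $\{x^{v^+} - x^{v^-} : v \in \mathcal{F}\}$ generate the toric ideal $I_M$ if and only if for every $b$ with $M^{-1}(b) = \{u \in \mathbb{N}^N : Mu = b\}$ nonempty, the fiber graph on $M^{-1}(b)$ with edges $\{u, u'\}$ whenever $u - u' \in \pm\mathcal{F}$ is connected. -/
open MvPolynomial

/-- The monomial map of a nonnegative integer matrix `M`: `x_j ↦ t^{M_{·j}}`. -/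
noncomputable def phiM (m N : ℕ) (M : Matrix (Fin m) (Fin N) ℕ) :
    MvPolynomial (Fin N) ℂ →ₐ[ℂ] MvPolynomial (Fin m) ℂ :=
  aeval fun j => monomial (Finsupp.equivFunOnFinite.symm fun i => M i j) 1

/-- The binomial `x^{v⁺} - x^{v⁻}` associated to an integer vector `v`. -/
noncomputable def binom (N : ℕ) (v : Fin N → ℤ) : MvPolynomial (Fin N) ℂ :=
  monomial (Finsupp.equivFunOnFinite.symm fun j => (v j).toNat) 1 -
    monomial (Finsupp.equivFunOnFinite.symm fun j => (-v j).toNat) 1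

noncomputable def phimap (m N : ℕ) (M : Matrix (Fin m) (Fin N) ℕ) (d : Fin N →₀ ℕ) :
    Fin m →₀ ℕ :=
  Finsupp.equivFunOnFinite.symm fun i => ∑ j, M i j * d j

lemma prod_monomial' {σ ι : Type*} (t : Finset ι) (g : ι → (σ →₀ ℕ)) :
    ∏ j ∈ t, (monomial (g j) (1:ℂ)) = monomial (∑ j ∈ t, g j) 1 := by
  induction t using Finset.cons_induction with
  | empty => simp
  | cons a t ha ih => rw [Finset.prod_cons, Finset.sum_cons, ih, monomial_mul, one_mul]

lemma phiM_monomial (m N : ℕ) (M : Matrix (Fin m) (Fin N) ℕ) (d : Fin N →₀ ℕ) (c : ℂ) :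
    phiM m N M (monomial d c) = monomial (phimap m N M d) c := by
  rw [phiM, aeval_monomial]
  have h1 : (d.prod fun j k => (monomial (Finsupp.equivFunOnFinite.symm fun i => M i j) (1:ℂ)) ^ k)
      = monomial (∑ j ∈ d.support, d j • Finsupp.equivFunOnFinite.symm fun i => M i j) 1 := by
    rw [Finsupp.prod, ← prod_monomial']
    exact Finset.prod_congr rfl fun j _ => by rw [monomial_pow, one_pow]
  rw [h1]
  have h2 : (∑ j ∈ d.support, d j • Finsupp.equivFunOnFinite.symm fun i => M i j)
      = phimap m N M d := by
    ext i
    rw [Finset.sum_apply', phimap]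
    simp only [Finsupp.smul_apply, Finsupp.coe_equivFunOnFinite_symm, smul_eq_mul]
    rw [Finset.sum_subset (Finset.subset_univ d.support)]
    · exact Finset.sum_congr rfl fun j _ => mul_comm _ _
    · intro j _ hj
      simp [Finsupp.notMem_support_iff.mp hj]
  rw [h2, algebraMap_eq, C_mul_monomial, mul_one]

lemma coeff_phiM (m N : ℕ) (M : Matrix (Fin m) (Fin N) ℕ) (f : MvPolynomial (Fin N) ℂ)
    (b : Fin m →₀ ℕ) :
    coeff b (phiM m N M f)
      = ∑ d ∈ f.support, if phimap m N M d = b then coeff d f else 0 := by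
  conv_lhs => rw [f.as_sum, map_sum]
  rw [coeff_sum]
  exact Finset.sum_congr rfl fun d _ => by rw [phiM_monomial, coeff_monomial]

noncomputable def Lmap {σ Q : Type*} (q : (σ →₀ ℕ) → Q) :
    MvPolynomial σ ℂ →+ (Q →₀ ℂ) :=
  (Finsupp.liftAddHom (fun d => Finsupp.singleAddHom (q d))).comp
    AddMonoidAlgebra.coeffAddEquiv.toAddMonoidHom

lemma Lmap_monomial {σ Q : Type*} (q : (σ →₀ ℕ) → Q) (d : σ →₀ ℕ) (c : ℂ) :
    Lmap q (monomial d c) = Finsupp.single (q d) c := by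
  rw [← single_eq_monomial]
  exact Finsupp.liftAddHom_apply_single _ _ _

lemma Lmap_mul_binom {σ Q : Type*} (q : (σ →₀ ℕ) → Q) (A B : σ →₀ ℕ)
    (hq : ∀ e, q (e + A) = q (e + B)) (r : MvPolynomial σ ℂ) :
    Lmap q (r * (monomial A 1 - monomial B 1)) = 0 := by
  induction r using MvPolynomial.induction_on' with
  | monomial e c =>
    rw [mul_sub, map_sub, monomial_mul, monomial_mul, Lmap_monomial, Lmap_monomial,
      mul_one, hq, sub_self]
  | add p p' hp hp' => rw [add_mul, map_add, hp, hp', add_zero]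

lemma step_mem (N : ℕ) (F : Finset (Fin N → ℤ)) (v : Fin N → ℤ) (hv : v ∈ F)
    (w w' : Fin N → ℕ) (h : ∀ j, (w' j : ℤ) = w j + v j) :
    (monomial (Finsupp.equivFunOnFinite.symm w) 1
      - monomial (Finsupp.equivFunOnFinite.symm w') 1 : MvPolynomial (Fin N) ℂ)
      ∈ Ideal.span {f | ∃ v ∈ F, f = binom N v} := by
  set a : Fin N → ℕ := fun j => w j - (-v j).toNat with ha
  have hw : Finsupp.equivFunOnFinite.symm w
      = Finsupp.equivFunOnFinite.symm a
        + Finsupp.equivFunOnFinite.symm (fun j => (-v j).toNat) := by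
    ext j
    simp only [Finsupp.add_apply, Finsupp.coe_equivFunOnFinite_symm, ha]
    have := h j; omega
  have hw' : Finsupp.equivFunOnFinite.symm w'
      = Finsupp.equivFunOnFinite.symm a
        + Finsupp.equivFunOnFinite.symm (fun j => (v j).toNat) := by
    ext j
    simp only [Finsupp.add_apply, Finsupp.coe_equivFunOnFinite_symm, ha]
    have := h j; omega
  have key : (monomial (Finsupp.equivFunOnFinite.symm w) 1
      - monomial (Finsupp.equivFunOnFinite.symm w') 1 : MvPolynomial (Fin N) ℂ)
      = -(monomial (Finsupp.equivFunOnFinite.symm a) 1 * binom N v) := by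
    rw [binom, mul_sub, monomial_mul, monomial_mul, mul_one, neg_sub, hw, hw']
  rw [key]
  exact neg_mem (Ideal.mul_mem_left _ _ (Ideal.subset_span ⟨v, hv, rfl⟩))
/-- Fundamental theorem of Markov bases: the binomials of a finite set
`F ⊆ ker_ℤ M` generate the toric ideal of `M` iff every fiber graph (with moves
from `F`) is connected. -/
theorem stmt18 (m N : ℕ) (M : Matrix (Fin m) (Fin N) ℕ)
    (hcol : ∀ j, ∃ i, M i j ≠ 0)
    (F : Finset (Fin N → ℤ))
    (hF : ∀ v ∈ F, ∀ i, ∑ j, (M i j : ℤ) * v j = 0) :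
    (Ideal.span {f | ∃ v ∈ F, f = binom N v} = RingHom.ker (phiM m N M).toRingHom) ↔
      ∀ u u' : Fin N → ℕ, (∀ i, ∑ j, M i j * u j = ∑ j, M i j * u' j) →
        Relation.ReflTransGen
          (fun w w' : Fin N → ℕ => ∃ v ∈ F,
            (∀ j, (w' j : ℤ) = w j + v j) ∨ (∀ j, (w j : ℤ) = w' j + v j))
          u u' := by
  set step := fun w w' : Fin N → ℕ => ∃ v ∈ F,
      (∀ j, (w' j : ℤ) = w j + v j) ∨ (∀ j, (w j : ℤ) = w' j + v j) with hstep
  have hsymm : Symmetric step := by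
    rintro w w' ⟨v, hv, h | h⟩
    exacts [⟨v, hv, Or.inr h⟩, ⟨v, hv, Or.inl h⟩]
  have hcoe : ∀ w : Fin N → ℕ, ⇑(Finsupp.equivFunOnFinite.symm w) = w := fun _ => rfl
  constructor
  · -- span = ker → connectivity
    intro hspan u u' hMfib
    set q : (Fin N →₀ ℕ) → ((Fin N → ℕ) → Prop) :=
      fun d => Relation.ReflTransGen step ⇑d with hqdef
    have hphi : phimap m N M (Finsupp.equivFunOnFinite.symm u)
        = phimap m N M (Finsupp.equivFunOnFinite.symm u') := by
      simp only [phimap, hcoe]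
      exact congrArg _ (funext fun i => hMfib i)
    have hmem : (monomial (Finsupp.equivFunOnFinite.symm u) 1
        - monomial (Finsupp.equivFunOnFinite.symm u') 1 : MvPolynomial (Fin N) ℂ)
        ∈ Ideal.span {f | ∃ v ∈ F, f = binom N v} := by
      rw [hspan, RingHom.mem_ker, AlgHom.toRingHom_eq_coe, RingHom.coe_coe, map_sub,
        phiM_monomial, phiM_monomial, hphi, sub_self]
    have hL0 : ∀ g ∈ Ideal.span {f | ∃ v ∈ F, f = binom N v}, Lmap q g = 0 := by
      intro g hg
      obtain ⟨c, hcsupp, rfl⟩ := Submodule.mem_span_set.mp hg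
      rw [map_finsuppSum, Finsupp.sum]
      apply Finset.sum_eq_zero
      intro a ha
      obtain ⟨v, hv, rfl⟩ := hcsupp ha
      rw [smul_eq_mul, binom]
      apply Lmap_mul_binom
      intro e
      apply _root_.funext; intro w; apply propext
      have hAB : Relation.ReflTransGen step
          ⇑(e + Finsupp.equivFunOnFinite.symm fun j => (v j).toNat)
          ⇑(e + Finsupp.equivFunOnFinite.symm fun j => (-v j).toNat) := by
        refine Relation.ReflTransGen.single ⟨v, hv, Or.inr fun j => ?_⟩
        simp only [Finsupp.coe_add, Pi.add_apply, Finsupp.coe_equivFunOnFinite_symm]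
        push_cast
        omega
      have hBA := by
        haveI : Std.Symm step := ⟨fun _ _ h => hsymm h⟩
        exact Std.Symm.symm _ _ hAB
      exact ⟨fun h => hBA.trans h, fun h => hAB.trans h⟩
    have hL := hL0 _ hmem
    rw [map_sub, Lmap_monomial, Lmap_monomial, sub_eq_zero] at hL
    have hq : q (Finsupp.equivFunOnFinite.symm u) = q (Finsupp.equivFunOnFinite.symm u') :=
      (Finsupp.single_left_inj one_ne_zero).mp hL
    have h2 := congrFun hq u'
    simp only [hqdef, hcoe] at h2
    exact h2.mpr Relation.ReflTransGen.refl
  · -- connectivity → span = ker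
    intro hconn
    have hsingle : ∀ w w' : Fin N → ℕ, step w w' →
        (monomial (Finsupp.equivFunOnFinite.symm w) 1
          - monomial (Finsupp.equivFunOnFinite.symm w') 1 : MvPolynomial (Fin N) ℂ)
          ∈ Ideal.span {f | ∃ v ∈ F, f = binom N v} := by
      rintro w w' ⟨v, hv, h | h⟩
      · exact step_mem N F v hv w w' h
      · have h2 := neg_mem (step_mem N F v hv w' w h)
        rwa [neg_sub] at h2
    have tele : ∀ w w' : Fin N → ℕ, Relation.ReflTransGen step w w' →
        (monomial (Finsupp.equivFunOnFinite.symm w) 1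
          - monomial (Finsupp.equivFunOnFinite.symm w') 1 : MvPolynomial (Fin N) ℂ)
          ∈ Ideal.span {f | ∃ v ∈ F, f = binom N v} := by
      intro w w' h
      induction h with
      | refl => rw [sub_self]; exact zero_mem _
      | tail _ hbc ih =>
        have h2 := add_mem ih (hsingle _ _ hbc)
        rwa [sub_add_sub_cancel] at h2
    apply le_antisymm
    · -- span ⊆ ker
      rw [Ideal.span_le]
      rintro g ⟨v, hv, rfl⟩
      simp only [SetLike.mem_coe, RingHom.mem_ker, AlgHom.toRingHom_eq_coe, RingHom.coe_coe,
        binom, map_sub, phiM_monomial]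
      have heq : phimap m N M (Finsupp.equivFunOnFinite.symm fun j => (v j).toNat)
          = phimap m N M (Finsupp.equivFunOnFinite.symm fun j => (-v j).toNat) := by
        simp only [phimap, hcoe]
        congr 1
        funext i
        have h0 := hF v hv i
        have hz : (↑(∑ j, M i j * (v j).toNat) : ℤ) = ↑(∑ j, M i j * (-v j).toNat) := by
          push_cast
          rw [← sub_eq_zero, ← Finset.sum_sub_distrib, ← h0]
          apply Finset.sum_congr rfl
          intro j _
          rw [← mul_sub]
          congr 1
          omega
        exact_mod_cast hz
      rw [heq, sub_self]
    · -- ker ⊆ span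
      intro f hf
      rw [RingHom.mem_ker, AlgHom.toRingHom_eq_coe, RingHom.coe_coe] at hf
      suffices h : ∀ n (f : MvPolynomial (Fin N) ℂ), f.support.card ≤ n →
          phiM m N M f = 0 → f ∈ Ideal.span {f | ∃ v ∈ F, f = binom N v} from
        h f.support.card f le_rfl hf
      intro n
      induction n with
      | zero =>
        intro f hc _
        rw [Nat.le_zero, Finset.card_eq_zero, support_eq_empty] at hc
        rw [hc]; exact zero_mem _
      | succ n ih =>
        intro f hc hf
        by_cases h0 : f = 0
        · rw [h0]; exact zero_mem _
        obtain ⟨u, hu⟩ := (support_nonempty.mpr h0)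
        have hcu : coeff u f ≠ 0 := mem_support_iff.mp hu
        have hsum : ∑ d ∈ f.support,
            (if phimap m N M d = phimap m N M u then coeff d f else 0) = 0 := by
          rw [← coeff_phiM, hf, coeff_zero]
        have hex : ∃ u' ∈ f.support, u' ≠ u ∧ phimap m N M u' = phimap m N M u := by
          by_contra hcon
          push_neg at hcon
          rw [Finset.sum_eq_single u
            (fun d hd hdu => if_neg (hcon d hd hdu))
            (fun h => absurd hu h), if_pos rfl] at hsum
          exact hcu hsum
        obtain ⟨u', hu's, hne, hphi⟩ := hex
        have hfib : ∀ i, ∑ j, M i j * (u : Fin N → ℕ) j = ∑ j, M i j * (u' : Fin N → ℕ) j := by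
          intro i
          have heq : (fun i => ∑ j, M i j * u' j) = (fun i => ∑ j, M i j * u j) := by
            apply Finsupp.equivFunOnFinite.symm.injective
            exact hphi
          exact (congrFun heq i).symm
        have hrtg := hconn ⇑u ⇑u' hfib
        have hgI : (monomial u 1 - monomial u' 1 : MvPolynomial (Fin N) ℂ)
            ∈ Ideal.span {f | ∃ v ∈ F, f = binom N v} := by
          have ht := tele ⇑u ⇑u' hrtg
          rwa [Finsupp.equivFunOnFinite_symm_coe, Finsupp.equivFunOnFinite_symm_coe] at ht
        set g : MvPolynomial (Fin N) ℂ := monomial u 1 - monomial u' 1 with hg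
        set f' : MvPolynomial (Fin N) ℂ := f - coeff u f • g with hf'
        have hphig : phiM m N M g = 0 := by
          rw [hg, map_sub, phiM_monomial, phiM_monomial, hphi, sub_self]
        have hphif' : phiM m N M f' = 0 := by
          rw [hf', map_sub, hf, map_smul, hphig, smul_zero, sub_zero]
        have hg_coeff : ∀ d, coeff d g =
            (if u = d then (1:ℂ) else 0) - (if u' = d then 1 else 0) := by
          intro d
          rw [hg, coeff_sub, coeff_monomial, coeff_monomial]
        have hsupp : f'.support ⊆ f.support \ {u} := by
          intro d hd
          have hd0 : coeff d f' ≠ 0 := mem_support_iff.mp hd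
          rw [Finset.mem_sdiff, Finset.mem_singleton]
          by_cases hdu : d = u
          · exfalso
            apply hd0
            rw [hf', coeff_sub, coeff_smul, hg_coeff, hdu, if_pos rfl,
              if_neg (fun h => hne (h.trans rfl))]
            simp
          · refine ⟨?_, hdu⟩
            by_cases hdu' : d = u'
            · rw [hdu']; exact hu's
            · rw [mem_support_iff]
              intro hdf
              apply hd0
              rw [hf', coeff_sub, coeff_smul, hg_coeff, hdf,
                if_neg (fun h => hdu h.symm), if_neg (fun h => hdu' h.symm)]
              simp
        have hcard : f'.support.card ≤ n := by
          have h1 : (f.support \ {u}).card = f.support.card - 1 := by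
            rw [Finset.card_sdiff_of_subset (Finset.singleton_subset_iff.mpr hu), Finset.card_singleton]
          have h2 := Finset.card_le_card hsupp
          have h3 : 1 ≤ f.support.card := Finset.card_pos.mpr ⟨u, hu⟩
          omega
        have hf'I := ih f' hcard hphif'
        have hfd : f = f' + coeff u f • g := by rw [hf', sub_add_cancel]
        rw [hfd]
        exact add_mem hf'I (Submodule.smul_of_tower_mem _ _ hgI)
end
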